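/- Let X ⊆ ℝⁿ be a measurable set, let π be a probability density function supported on X, let d : X × [0,∞) → [0,1] be jointly measurable with d(x,0) = 0 and d(x,·) nondecreasing and right-continuous for each x ∈ X, and let E be a cumulative effort function. Then there exists a uniformly optimal search plan for π within Φ(E); that is, there exists a search plan φ* with ∫_X φ*(x,t) dx = E(t) for all t ≥ 0 such that for every search plan φ with ∫_X φ(x,t) dx = E(t) for all t ≥ 0 and every t ≥ 0 one has ∫_X d(x, φ*(x,t)) π(x) dx ≥ ∫_X d(x, φ(x,t)) π(x) dx. -/

import Mathlib

open MeasureTheory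

open MeasureTheory Set Filter Topology

namespace SearchPlan

/-- Lagrangian objective. -/
noncomputable def gfun (D : ℝ → ℝ) (p lam y : ℝ) : ℝ := p * D (max y 0) - lam * max y 0

/-- Niceness of a detection profile. -/
structure Nice (D : ℝ → ℝ) (p : ℝ) : Prop where
  mono : MonotoneOn D (Set.Ici 0)
  rc : ∀ y ≥ (0:ℝ), ContinuousWithinAt D (Set.Ici y) y
  nonneg : ∀ y ≥ (0:ℝ), 0 ≤ D y
  le_one : ∀ y ≥ (0:ℝ), D y ≤ 1
  zero : D 0 = 0
  ppos : 0 < p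

variable {D : ℝ → ℝ} {p lam : ℝ}

lemma gfun_of_nonneg (h : 0 ≤ y) : gfun D p lam y = p * D y - lam * y := by
  simp [gfun, max_eq_left h]

lemma gfun_zero (hD : D 0 = 0) : gfun D p lam 0 = 0 := by simp [gfun, hD]

lemma Nice.Dhat_mono (hD : Nice D p) : Monotone (fun y => D (max y 0)) := by
  intro a b hab
  exact hD.mono (le_max_right a 0) (le_max_right b 0) (max_le_max hab le_rfl)

lemma Nice.Dhat_cwa (hD : Nice D p) {y : ℝ} (hy : 0 ≤ y) :
    ContinuousWithinAt (fun z => D (max z 0)) (Set.Ici y) y := by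
  have h1 : ContinuousWithinAt (fun z : ℝ => max z 0) (Set.Ici y) y :=
    (continuous_id.max continuous_const).continuousWithinAt
  have h2 : ContinuousWithinAt D (Set.Ici y) (max y 0) := by
    rw [max_eq_left hy]; exact hD.rc y hy
  refine ContinuousWithinAt.comp (g := D) (f := fun z : ℝ => max z 0) (x := y) h2 h1 ?_
  intro z hz
  simp only [mem_Ici] at *
  exact le_max_of_le_left hz

lemma Nice.gfun_cwa (hD : Nice D p) {y : ℝ} (hy : 0 ≤ y) :
    ContinuousWithinAt (gfun D p lam) (Set.Ici y) y := by
  have h1 := hD.Dhat_cwa (p := p) hy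
  have h2 : ContinuousWithinAt (fun z : ℝ => max z 0) (Set.Ici y) y :=
    (continuous_id.max continuous_const).continuousWithinAt
  exact ((continuousWithinAt_const.mul h1).sub (continuousWithinAt_const.mul h2))

lemma Nice.tendsto_gfun_seq (hD : Nice D p) {y : ℝ} (hy : 0 ≤ y) {u : ℕ → ℝ}
    (hu : ∀ k, y ≤ u k) (hto : Tendsto u atTop (𝓝 y)) :
    Tendsto (fun k => gfun D p lam (u k)) atTop (𝓝 (gfun D p lam y)) := by
  have h1 : Tendsto u atTop (𝓝[≥] y) :=
    tendsto_nhdsWithin_iff.2 ⟨hto, Eventually.of_forall (fun k => hu k)⟩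
  exact ((hD.gfun_cwa (lam := lam) hy).tendsto).comp h1

lemma Nice.Dhat_usc (hD : Nice D p) : UpperSemicontinuous (fun y => D (max y 0)) := by
  intro y c hc
  rcases lt_or_ge y 0 with hy | hy
  · filter_upwards [Iio_mem_nhds hy] with z hz
    have hz' : z < 0 := hz
    have e1 : max z 0 = 0 := max_eq_right hz'.le
    have e2 : max y 0 = 0 := max_eq_right hy.le
    simp only [e2] at hc
    simpa [e1] using hc
  · have hcw : ContinuousWithinAt (fun z => D (max z 0)) (Set.Ici y) y := hD.Dhat_cwa hy
    have hright : ∀ᶠ z in 𝓝[≥] y, D (max z 0) < c := by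
      have := hcw (Iio_mem_nhds hc)
      exact this
    have hleft : ∀ᶠ z in 𝓝[≤] y, D (max z 0) < c := by
      refine eventually_nhdsWithin_of_forall (fun z hz => ?_)
      exact lt_of_le_of_lt (hD.Dhat_mono hz) hc
    rw [← nhdsLE_sup_nhdsGE y, eventually_sup]
    exact ⟨hleft, hright⟩

lemma Nice.gfun_usc (hD : Nice D p) : UpperSemicontinuous (gfun D p lam) := by
  have h1 : UpperSemicontinuous (fun y => p * D (max y 0)) := by
    intro y c hc
    have hc' : D (max y 0) < c / p := (lt_div_iff₀' hD.ppos).2 hc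
    filter_upwards [hD.Dhat_usc y _ hc'] with z hz
    have hp : p ≠ 0 := hD.ppos.ne'
    calc p * D (max z 0) < p * (c / p) := by exact (mul_lt_mul_iff_right₀ hD.ppos).2 hz
    _ = c := by field_simp
  have h2 : UpperSemicontinuous (fun y : ℝ => -(lam * max y 0)) :=
    (Continuous.upperSemicontinuous (by continuity))
  have := h1.add h2
  have e : gfun D p lam = fun z => p * D (max z 0) + -(lam * max z 0) := by
    funext z; simp [gfun, sub_eq_add_neg]
  rw [e]; exact this

lemma Nice.gfun_le (hD : Nice D p) (hl : 0 ≤ lam) (y : ℝ) : gfun D p lam y ≤ p := by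
  have h1 : D (max y 0) ≤ 1 := hD.le_one _ (le_max_right y 0)
  have h2 : 0 ≤ lam * max y 0 := mul_nonneg hl (le_max_right y 0)
  calc gfun D p lam y ≤ p * 1 - 0 := by
        refine sub_le_sub ?_ h2
        exact (mul_le_mul_of_nonneg_left h1 hD.ppos.le)
  _ = p := by ring

/-- An upper semicontinuous real function attains its max on a compact interval. -/
lemma usc_exists_max {f : ℝ → ℝ} (hf : UpperSemicontinuous f) {a b : ℝ} (hab : a ≤ b) :
    ∃ m ∈ Icc a b, ∀ z ∈ Icc a b, f z ≤ f m := by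
  by_contra h
  push_neg at h
  have hcover : Icc a b ⊆ ⋃ z : Icc a b, {w : ℝ | f w < f (z : ℝ)} := by
    intro x hx
    obtain ⟨z, hz, hfz⟩ := h x hx
    exact mem_iUnion.2 ⟨⟨z, hz⟩, hfz⟩
  obtain ⟨t, ht⟩ := isCompact_Icc.elim_finite_subcover
    (fun z : Icc a b => {w : ℝ | f w < f (z : ℝ)})
    (fun z => hf.isOpen_preimage _) hcover
  have hne : t.Nonempty := by
    rcases Finset.eq_empty_or_nonempty t with rfl | h'
    · exfalso
      have := ht (left_mem_Icc.2 hab)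
      simpa using this
    · exact h'
  obtain ⟨z0, hz0t, hz0max⟩ := t.exists_max_image (fun z => f (z : ℝ)) hne
  have hz0mem : (z0 : ℝ) ∈ Icc a b := z0.2
  have := ht hz0mem
  simp only [Finset.mem_coe, mem_iUnion] at this
  obtain ⟨z1, hz1t, hz1⟩ := this
  exact absurd (hz0max z1 hz1t) (not_le.2 hz1)

/-- The set of maximizers of the Lagrangian. -/
def MaxSet (D : ℝ → ℝ) (p lam : ℝ) : Set ℝ :=
  {y | 0 ≤ y ∧ ∀ z, 0 ≤ z → gfun D p lam z ≤ gfun D p lam y}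

lemma Nice.maxset_subset (hD : Nice D p) (hl : 0 < lam) :
    MaxSet D p lam ⊆ Icc 0 (p / lam) := by
  rintro y ⟨hy0, hy⟩
  refine ⟨hy0, ?_⟩
  have h0 : gfun D p lam 0 ≤ gfun D p lam y := hy 0 le_rfl
  rw [gfun_zero hD.zero, gfun_of_nonneg hy0] at h0
  have h1 : lam * y ≤ p * D y := by linarith
  have h2 : p * D y ≤ p * 1 := mul_le_mul_of_nonneg_left (hD.le_one y hy0) hD.ppos.le
  rw [le_div_iff₀ hl]
  nlinarith

lemma Nice.maxset_nonempty (hD : Nice D p) (hl : 0 < lam) :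
    (MaxSet D p lam).Nonempty := by
  have hb : (0:ℝ) ≤ p / lam := div_nonneg hD.ppos.le hl.le
  obtain ⟨m, hm, hmax⟩ := usc_exists_max (hD.gfun_usc (lam := lam)) hb
  refine ⟨m, hm.1, fun z hz => ?_⟩
  rcases le_or_gt z (p / lam) with h | h
  · exact hmax z ⟨hz, h⟩
  · have h1 : gfun D p lam z ≤ p - lam * z := by
      rw [gfun_of_nonneg hz]
      have := hD.le_one z hz
      nlinarith [hD.ppos]
    have h2 : p - lam * z < 0 := by
      have := (div_lt_iff₀ hl).1 h
      linarith
    have h3 : gfun D p lam 0 ≤ gfun D p lam m := hmax 0 ⟨le_rfl, hb⟩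
    rw [gfun_zero hD.zero] at h3
    linarith

lemma Nice.maxset_closed (hD : Nice D p) : IsClosed (MaxSet D p lam) := by
  have : MaxSet D p lam =
      (Ici 0) ∩ ⋂ z : Ici (0:ℝ), {y | gfun D p lam y ∈ Ici (gfun D p lam (z:ℝ))} := by
    ext y
    simp only [MaxSet, mem_inter_iff, mem_setOf_eq, mem_iInter, mem_Ici]
    constructor
    · rintro ⟨h1, h2⟩; exact ⟨h1, fun z => h2 z z.2⟩
    · rintro ⟨h1, h2⟩; exact ⟨h1, fun z hz => h2 ⟨z, hz⟩⟩
  rw [this]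
  refine isClosed_Ici.inter (isClosed_iInter (fun z => ?_))
  exact (hD.gfun_usc (lam := lam)).isClosed_preimage _

noncomputable def Ymax (D : ℝ → ℝ) (p lam : ℝ) : ℝ := sSup (MaxSet D p lam)
noncomputable def Ymin (D : ℝ → ℝ) (p lam : ℝ) : ℝ := sInf (MaxSet D p lam)

lemma Nice.bddAbove_maxset (hD : Nice D p) (hl : 0 < lam) : BddAbove (MaxSet D p lam) :=
  (BddAbove.mono (hD.maxset_subset hl)) (bddAbove_Icc)

lemma Nice.bddBelow_maxset (hD : Nice D p) (hl : 0 < lam) : BddBelow (MaxSet D p lam) :=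
  (BddBelow.mono (hD.maxset_subset hl)) (bddBelow_Icc)

lemma Nice.Ymax_mem (hD : Nice D p) (hl : 0 < lam) : Ymax D p lam ∈ MaxSet D p lam :=
  (hD.maxset_closed).csSup_mem (hD.maxset_nonempty hl) (hD.bddAbove_maxset hl)

lemma Nice.Ymin_mem (hD : Nice D p) (hl : 0 < lam) : Ymin D p lam ∈ MaxSet D p lam :=
  (hD.maxset_closed).csInf_mem (hD.maxset_nonempty hl) (hD.bddBelow_maxset hl)

lemma Nice.Ymax_nonneg (hD : Nice D p) (hl : 0 < lam) : 0 ≤ Ymax D p lam :=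
  (hD.Ymax_mem hl).1

lemma Nice.Ymin_nonneg (hD : Nice D p) (hl : 0 < lam) : 0 ≤ Ymin D p lam :=
  (hD.Ymin_mem hl).1

lemma Nice.Ymax_le (hD : Nice D p) (hl : 0 < lam) : Ymax D p lam ≤ p / lam :=
  ((hD.maxset_subset hl) (hD.Ymax_mem hl)).2

lemma Nice.Ymin_le_Ymax (hD : Nice D p) (hl : 0 < lam) : Ymin D p lam ≤ Ymax D p lam :=
  csInf_le_csSup (hD.maxset_nonempty hl) (hD.bddBelow_maxset hl) (hD.bddAbove_maxset hl)

/-- comparative statics: maximizers at a larger multiplier lie below maximizers at a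
smaller multiplier. -/
lemma maxset_order (hD : Nice D p) {lam' : ℝ} (h : lam' < lam) {a b : ℝ}
    (ha : a ∈ MaxSet D p lam) (hb : b ∈ MaxSet D p lam') : a ≤ b := by
  by_contra hab
  push_neg at hab   -- b < a
  have h1 : gfun D p lam b ≤ gfun D p lam a := ha.2 b hb.1
  have h2 : gfun D p lam' a ≤ gfun D p lam' b := hb.2 a ha.1
  rw [gfun_of_nonneg hb.1, gfun_of_nonneg ha.1] at h1
  rw [gfun_of_nonneg ha.1, gfun_of_nonneg hb.1] at h2
  nlinarith

end SearchPlan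

namespace SearchPlan
variable {D : ℝ → ℝ} {p lam : ℝ}

lemma gfun_eq_max (D : ℝ → ℝ) (p lam y : ℝ) : gfun D p lam y = gfun D p lam (max y 0) := by
  simp [gfun, max_assoc]

lemma Nice.gfun_le_linear (hD : Nice D p) {y : ℝ} (hy : 0 ≤ y) :
    gfun D p lam y ≤ p - lam * y := by
  rw [gfun_of_nonneg hy]
  have := hD.le_one y hy
  nlinarith [hD.ppos]

/-- rational sequences decreasing to a real. -/
lemma exists_rat_seq_tendsto_right (y : ℝ) : ∃ q : ℕ → ℚ,
    (∀ k, y < (q k : ℝ)) ∧ Tendsto (fun k => ((q k : ℝ))) atTop (𝓝 y) := by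
  have h : ∀ k : ℕ, ∃ q : ℚ, y < (q:ℝ) ∧ (q:ℝ) < y + 1/(k+1) := by
    intro k
    have : y < y + 1/(k+1) := by
      have : (0:ℝ) < 1/(k+1) := by positivity
      linarith
    exact_mod_cast exists_rat_btwn this
  choose q hq1 hq2 using h
  refine ⟨q, hq1, ?_⟩
  have h2 : Tendsto (fun k : ℕ => y + 1/(k+1)) atTop (𝓝 y) := by
    have := tendsto_one_div_add_atTop_nhds_zero_nat (𝕜 := ℝ)
    have h3 := tendsto_const_nhds (x := y) (f := atTop (α := ℕ)) |>.add this
    simpa using h3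
  exact tendsto_of_tendsto_of_tendsto_of_le_of_le tendsto_const_nhds h2
    (fun k => (hq1 k).le) (fun k => (hq2 k).le)

noncomputable def LL (D : ℝ → ℝ) (p lam : ℝ) : ℝ := ⨆ q : ℚ, gfun D p lam q
noncomputable def SS (D : ℝ → ℝ) (p lam : ℝ) (r : ℝ) : ℝ :=
  ⨆ q : ℚ, gfun D p lam (max |(q:ℝ)| r)
noncomputable def TT (D : ℝ → ℝ) (p lam : ℝ) (r : ℝ) : ℝ :=
  ⨆ q : ℚ, gfun D p lam (min |(q:ℝ)| (max r 0))

lemma gfun_le_LL (hD : Nice D p) (hl : 0 < lam) (q : ℚ) :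
    gfun D p lam q ≤ LL D p lam := by
  unfold LL
  refine le_ciSup (f := fun q : ℚ => gfun D p lam (q:ℝ)) ⟨p, ?_⟩ q
  rintro - ⟨i, rfl⟩
  exact hD.gfun_le hl.le _

lemma Nice.LL_eq_gfun_Ymax (hD : Nice D p) (hl : 0 < lam) :
    LL D p lam = gfun D p lam (Ymax D p lam) := by
  have hY := hD.Ymax_mem hl
  apply le_antisymm
  · apply ciSup_le
    intro q
    rw [gfun_eq_max]
    exact hY.2 _ (le_max_right _ 0)
  · obtain ⟨q, hq1, hq2⟩ := exists_rat_seq_tendsto_right (Ymax D p lam)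
    have h1 : Tendsto (fun k => gfun D p lam (q k)) atTop (𝓝 (gfun D p lam (Ymax D p lam))) :=
      hD.tendsto_gfun_seq hY.1 (fun k => (hq1 k).le) hq2
    exact le_of_tendsto h1 (Eventually.of_forall (fun k => gfun_le_LL hD hl (q k)))

lemma Nice.gfun_Ymin_eq (hD : Nice D p) (hl : 0 < lam) :
    gfun D p lam (Ymin D p lam) = gfun D p lam (Ymax D p lam) :=
  le_antisymm ((hD.Ymax_mem hl).2 _ (hD.Ymin_mem hl).1)
    ((hD.Ymin_mem hl).2 _ (hD.Ymax_mem hl).1)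

lemma Nice.bdd_gfun_range (hD : Nice D p) (hl : 0 < lam) (f : ℚ → ℝ) :
    BddAbove (Set.range fun q : ℚ => gfun D p lam (f q)) := by
  refine ⟨p, ?_⟩
  rintro - ⟨i, rfl⟩
  exact hD.gfun_le hl.le _

/-- SS criterion. -/
lemma Nice.SS_eq_iff (hD : Nice D p) (hl : 0 < lam) (r : ℝ) :
    SS D p lam r = LL D p lam ↔ r ≤ Ymax D p lam := by
  have hY := hD.Ymax_mem hl
  constructor
  · intro h
    -- attain max of gfun on [max r 0, K]
    set r0 := max r 0 with hr0
    have hr00 : 0 ≤ r0 := le_max_right _ _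
    set K := max r0 ((p - gfun D p lam r0)/lam) with hK
    have hrK : r0 ≤ K := le_max_left _ _
    obtain ⟨m, hm, hmax⟩ := usc_exists_max (hD.gfun_usc (lam := lam)) hrK
    have hSSle : SS D p lam r ≤ gfun D p lam m := by
      apply ciSup_le
      intro q
      set z := max |(q:ℝ)| r with hz
      have hz0 : 0 ≤ z := le_trans (abs_nonneg _) (le_max_left _ _)
      have hzr0 : r0 ≤ z := max_le (le_max_right _ _) hz0
      rcases le_or_gt z K with hzK | hzK
      · exact hmax z ⟨hzr0, hzK⟩
      · have h1 : gfun D p lam z ≤ p - lam * z := hD.gfun_le_linear hz0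
        have h2 : (p - gfun D p lam r0)/lam < z := lt_of_le_of_lt (le_max_right _ _) hzK
        have h3 : p - gfun D p lam r0 < lam * z := by
          rw [div_lt_iff₀ hl] at h2; linarith
        have h4 : gfun D p lam r0 ≤ gfun D p lam m := hmax r0 ⟨le_rfl, hrK⟩
        linarith
    rw [h, hD.LL_eq_gfun_Ymax hl] at hSSle
    have hmem : m ∈ MaxSet D p lam := by
      refine ⟨le_trans hr00 hm.1, fun z hz => ?_⟩
      exact le_trans (hY.2 z hz) hSSle
    have : m ≤ Ymax D p lam := le_csSup (hD.bddAbove_maxset hl) hmem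
    exact le_trans (le_trans (le_max_left r 0) hm.1) this
  · intro hr
    apply le_antisymm
    · apply ciSup_le
      intro q
      rw [gfun_eq_max]
      exact le_trans (hY.2 _ (le_max_right _ 0)) (by rw [← hD.LL_eq_gfun_Ymax hl])
    · obtain ⟨q, hq1, hq2⟩ := exists_rat_seq_tendsto_right (Ymax D p lam)
      have habs : ∀ k, max |(q k : ℝ)| r = (q k : ℝ) := by
        intro k
        have h1 : (0:ℝ) ≤ q k := le_trans hY.1 (hq1 k).le
        rw [abs_of_nonneg h1]
        exact max_eq_left (le_trans hr (hq1 k).le)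
      have h1 : Tendsto (fun k => gfun D p lam (q k)) atTop
          (𝓝 (gfun D p lam (Ymax D p lam))) :=
        hD.tendsto_gfun_seq hY.1 (fun k => (hq1 k).le) hq2
      rw [hD.LL_eq_gfun_Ymax hl]
      refine le_of_tendsto h1 (Eventually.of_forall (fun k => ?_))
      have := le_ciSup (hD.bdd_gfun_range hl (fun q' : ℚ => max |(q':ℝ)| r)) (q k)
      rwa [habs k] at this

/-- TT criterion. -/
lemma Nice.TT_eq_iff (hD : Nice D p) (hl : 0 < lam) (r : ℝ) :
    TT D p lam r = LL D p lam ↔ Ymin D p lam ≤ max r 0 := by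
  have hY := hD.Ymin_mem hl
  have hYx := hD.Ymax_mem hl
  set r0 := max r 0 with hr0
  have hr00 : 0 ≤ r0 := le_max_right _ _
  constructor
  · intro h
    obtain ⟨m, hm, hmax⟩ := usc_exists_max (hD.gfun_usc (lam := lam)) hr00
    have hTTle : TT D p lam r ≤ gfun D p lam m := by
      apply ciSup_le
      intro q
      refine hmax _ ⟨le_min (abs_nonneg _) hr00, min_le_right _ _⟩
    rw [h, hD.LL_eq_gfun_Ymax hl] at hTTle
    have hmem : m ∈ MaxSet D p lam := by
      refine ⟨hm.1, fun z hz => ?_⟩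
      exact le_trans (hYx.2 z hz) hTTle
    exact le_trans (csInf_le (hD.bddBelow_maxset hl) hmem) hm.2
  · intro hr
    apply le_antisymm
    · apply ciSup_le
      intro q
      rw [gfun_eq_max]
      have := hYx.2 (max (min |(q:ℝ)| r0) 0) (le_max_right _ 0)
      rw [← hD.LL_eq_gfun_Ymax hl] at this
      exact this
    · -- approximate Ymin from the right by mesh points
      obtain ⟨q, hq1, hq2⟩ := exists_rat_seq_tendsto_right (Ymin D p lam)
      set u := fun k => min |(q k : ℝ)| r0 with hu
      have hu1 : ∀ k, Ymin D p lam ≤ u k := by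
        intro k
        refine le_min ?_ hr
        rw [abs_of_nonneg (le_trans hY.1 (hq1 k).le)]
        exact (hq1 k).le
      have hu2 : ∀ k, u k ≤ (q k : ℝ) := by
        intro k
        refine le_trans (min_le_left _ _) ?_
        rw [abs_of_nonneg (le_trans hY.1 (hq1 k).le)]
      have hu3 : Tendsto u atTop (𝓝 (Ymin D p lam)) :=
        tendsto_of_tendsto_of_tendsto_of_le_of_le tendsto_const_nhds hq2 hu1 hu2
      have h1 : Tendsto (fun k => gfun D p lam (u k)) atTop
          (𝓝 (gfun D p lam (Ymin D p lam))) :=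
        hD.tendsto_gfun_seq hY.1 hu1 hu3
      rw [hD.LL_eq_gfun_Ymax hl, ← hD.gfun_Ymin_eq hl]
      refine le_of_tendsto h1 (Eventually.of_forall (fun k => ?_))
      exact le_ciSup (hD.bdd_gfun_range hl (fun q' : ℚ => min |(q':ℝ)| r0)) (q k)

/-- measurable formula for the largest maximizer -/
noncomputable def YY (D : ℝ → ℝ) (p lam : ℝ) : ℝ :=
  ⨆ q : ℚ, if SS D p lam q = LL D p lam then max (q:ℝ) 0 else 0

/-- measurable formula for the smallest maximizer -/
noncomputable def WW (D : ℝ → ℝ) (p lam : ℝ) : ℝ :=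
  ⨅ q : ℚ, if TT D p lam q = LL D p lam then max (q:ℝ) 0 else (p / lam + 1)

lemma Nice.YY_eq (hD : Nice D p) (hl : 0 < lam) : YY D p lam = Ymax D p lam := by
  have hY := hD.Ymax_mem hl
  have hbdd : BddAbove (Set.range fun q : ℚ =>
      if SS D p lam q = LL D p lam then max (q:ℝ) 0 else 0) := by
    refine ⟨Ymax D p lam, ?_⟩
    rintro - ⟨q, rfl⟩
    dsimp only
    split_ifs with hq
    · have := (hD.SS_eq_iff hl q).1 hq
      exact max_le this hY.1
    · exact hY.1
  apply le_antisymm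
  · apply ciSup_le
    intro q
    split_ifs with hq
    · exact max_le ((hD.SS_eq_iff hl q).1 hq) hY.1
    · exact hY.1
  · by_contra hcon
    push_neg at hcon
    obtain ⟨q, hq1, hq2⟩ := exists_rat_btwn hcon
    have hcond : SS D p lam q = LL D p lam := (hD.SS_eq_iff hl q).2 hq2.le
    have : (if SS D p lam q = LL D p lam then max (q:ℝ) 0 else 0) ≤ YY D p lam :=
      le_ciSup hbdd q
    rw [if_pos hcond] at this
    have := le_trans (le_max_left (q:ℝ) 0) this
    linarith

lemma Nice.WW_eq (hD : Nice D p) (hl : 0 < lam) : WW D p lam = Ymin D p lam := by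
  have hY := hD.Ymin_mem hl
  have hbdd : BddBelow (Set.range fun q : ℚ =>
      if TT D p lam q = LL D p lam then max (q:ℝ) 0 else (p / lam + 1)) := by
    refine ⟨0, ?_⟩
    rintro - ⟨q, rfl⟩
    dsimp only
    split_ifs with hq
    · exact le_max_right _ _
    · nlinarith [div_pos hD.ppos hl]
  apply le_antisymm
  · by_contra hcon
    push_neg at hcon
    obtain ⟨q, hq1, hq2⟩ := exists_rat_btwn hcon
    have hq0 : (0:ℝ) ≤ (q:ℝ) := le_trans hY.1 hq1.le
    have hcond : TT D p lam q = LL D p lam := by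
      refine (hD.TT_eq_iff hl q).2 ?_
      rw [max_eq_left hq0]
      exact hq1.le
    have h1 : WW D p lam ≤ max (q:ℝ) 0 := by
      have := ciInf_le hbdd q
      rwa [if_pos hcond] at this
    rw [max_eq_left hq0] at h1
    linarith
  · apply le_ciInf
    intro q
    split_ifs with hq
    · exact (hD.TT_eq_iff hl q).1 hq
    · have h1 : Ymin D p lam ≤ p / lam :=
        le_trans (hD.Ymin_le_Ymax hl) (hD.Ymax_le hl)
      linarith

end SearchPlan
namespace SearchPlan
variable {D : ℝ → ℝ} {p lam : ℝ}

lemma Nice.Ymax_le_Ymin_of_lt (hD : Nice D p) {lam1 lam2 : ℝ} (h1 : 0 < lam1)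
    (hlt : lam1 < lam2) : Ymax D p lam2 ≤ Ymin D p lam1 :=
  maxset_order hD hlt (hD.Ymax_mem (h1.trans hlt)) (hD.Ymin_mem h1)

lemma Nice.Ymax_antitone (hD : Nice D p) {lam1 lam2 : ℝ} (h1 : 0 < lam1) (hle : lam1 ≤ lam2) :
    Ymax D p lam2 ≤ Ymax D p lam1 := by
  rcases eq_or_lt_of_le hle with rfl | hlt
  · exact le_rfl
  · exact le_trans (hD.Ymax_le_Ymin_of_lt h1 hlt) (hD.Ymin_le_Ymax h1)

/-- Limit from the right: Ymax along a decreasing sequence of multipliers tending to `lam`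
from above converges (monotonically upward) to `Ymin` at `lam`. -/
lemma Nice.tendsto_Ymax_desc (hD : Nice D p) (hlam : 0 < lam) {l : ℕ → ℝ}
    (hl : ∀ k, lam < l k) (hanti : Antitone l) (hto : Tendsto l atTop (𝓝 lam)) :
    Monotone (fun k => Ymax D p (l k)) ∧
      Tendsto (fun k => Ymax D p (l k)) atTop (𝓝 (Ymin D p lam)) := by
  have hlk : ∀ k, 0 < l k := fun k => hlam.trans (hl k)
  have hmono : Monotone (fun k => Ymax D p (l k)) := by
    intro i j hij
    exact hD.Ymax_antitone (hlk j) (hanti hij)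
  have hb : ∀ k, Ymax D p (l k) ≤ Ymin D p lam :=
    fun k => hD.Ymax_le_Ymin_of_lt hlam (hl k)
  have hbdd : BddAbove (Set.range fun k => Ymax D p (l k)) := by
    refine ⟨Ymin D p lam, ?_⟩
    rintro - ⟨k, rfl⟩
    exact hb k
  set A := ⨆ k, Ymax D p (l k) with hA
  have hconv : Tendsto (fun k => Ymax D p (l k)) atTop (𝓝 A) :=
    tendsto_atTop_ciSup hmono hbdd
  have hA_le : A ≤ Ymin D p lam := ciSup_le hb
  have hk_le : ∀ k, Ymax D p (l k) ≤ A := fun k => le_ciSup hbdd k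
  have hA_nonneg : 0 ≤ A := le_trans (hD.Ymax_nonneg (hlk 0)) (hk_le 0)
  have hmem : A ∈ MaxSet D p lam := by
    refine ⟨hA_nonneg, fun z hz => ?_⟩
    have key : ∀ k, p * D z - l k * z ≤ p * D A - l k * Ymax D p (l k) := by
      intro k
      have h1 := (hD.Ymax_mem (hlk k)).2 z hz
      rw [gfun_of_nonneg hz, gfun_of_nonneg (hD.Ymax_nonneg (hlk k))] at h1
      have h2 : D (Ymax D p (l k)) ≤ D A :=
        hD.mono (hD.Ymax_nonneg (hlk k)) hA_nonneg (hk_le k)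
      nlinarith [hD.ppos]
    have hL : Tendsto (fun k => p * D z - l k * z) atTop (𝓝 (p * D z - lam * z)) :=
      tendsto_const_nhds.sub (hto.mul tendsto_const_nhds)
    have hR : Tendsto (fun k => p * D A - l k * Ymax D p (l k)) atTop
        (𝓝 (p * D A - lam * A)) :=
      tendsto_const_nhds.sub (hto.mul hconv)
    have := le_of_tendsto_of_tendsto' hL hR key
    rw [gfun_of_nonneg hz, gfun_of_nonneg hA_nonneg]
    linarith
  have : A = Ymin D p lam :=
    le_antisymm hA_le (csInf_le (hD.bddBelow_maxset hlam) hmem)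
  rw [← this]
  exact ⟨hmono, hconv⟩

/-- Limit from the left: Ymin along an increasing sequence of multipliers tending to `lam`
from below converges (monotonically downward) to `Ymax` at `lam`. -/
lemma Nice.tendsto_Ymin_asc (hD : Nice D p) (hlam : 0 < lam) {l : ℕ → ℝ}
    (hl : ∀ k, 0 < l k) (hl2 : ∀ k, l k < lam) (hmono' : Monotone l)
    (hto : Tendsto l atTop (𝓝 lam)) :
    Antitone (fun k => Ymin D p (l k)) ∧
      Tendsto (fun k => Ymin D p (l k)) atTop (𝓝 (Ymax D p lam)) := by
  have hanti : Antitone (fun k => Ymin D p (l k)) := by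
    intro i j hij
    rcases eq_or_lt_of_le (hmono' hij) with heq | hlt
    · dsimp only; rw [heq]
    · exact maxset_order hD hlt (hD.Ymin_mem (hl j)) (hD.Ymin_mem (hl i))
  have hb : ∀ k, Ymax D p lam ≤ Ymin D p (l k) :=
    fun k => maxset_order hD (hl2 k) (hD.Ymax_mem hlam) (hD.Ymin_mem (hl k))
  have hbdd : BddBelow (Set.range fun k => Ymin D p (l k)) := by
    refine ⟨Ymax D p lam, ?_⟩
    rintro - ⟨k, rfl⟩
    exact hb k
  set B := ⨅ k, Ymin D p (l k) with hB
  have hconv : Tendsto (fun k => Ymin D p (l k)) atTop (𝓝 B) :=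
    tendsto_atTop_ciInf hanti hbdd
  have hB_ge : Ymax D p lam ≤ B := le_ciInf hb
  have hk_ge : ∀ k, B ≤ Ymin D p (l k) := fun k => ciInf_le hbdd k
  have hB_nonneg : 0 ≤ B := le_trans (hD.Ymax_nonneg hlam) hB_ge
  have hDB : Tendsto (fun k => D (Ymin D p (l k))) atTop (𝓝 (D B)) := by
    have h1 : Tendsto (fun k => Ymin D p (l k)) atTop (𝓝[≥] B) :=
      tendsto_nhdsWithin_iff.2 ⟨hconv, Eventually.of_forall (fun k => hk_ge k)⟩
    exact (hD.rc B hB_nonneg).tendsto.comp h1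
  have hmem : B ∈ MaxSet D p lam := by
    refine ⟨hB_nonneg, fun z hz => ?_⟩
    have key : ∀ k, p * D z - l k * z ≤ p * D (Ymin D p (l k)) - l k * Ymin D p (l k) := by
      intro k
      have h1 := (hD.Ymin_mem (hl k)).2 z hz
      rw [gfun_of_nonneg hz, gfun_of_nonneg (hD.Ymin_nonneg (hl k))] at h1
      linarith
    have hL : Tendsto (fun k => p * D z - l k * z) atTop (𝓝 (p * D z - lam * z)) :=
      tendsto_const_nhds.sub (hto.mul tendsto_const_nhds)
    have hR : Tendsto (fun k => p * D (Ymin D p (l k)) - l k * Ymin D p (l k)) atTop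
        (𝓝 (p * D B - lam * B)) :=
      (tendsto_const_nhds.mul hDB).sub (hto.mul hconv)
    have := le_of_tendsto_of_tendsto' hL hR key
    rw [gfun_of_nonneg hz, gfun_of_nonneg hB_nonneg]
    linarith
  have : B = Ymax D p lam :=
    le_antisymm (le_csSup (hD.bddAbove_maxset hlam) hmem) hB_ge
  rw [← this]
  exact ⟨hanti, hconv⟩

/-- The sequence of multipliers tending to `0`. -/
noncomputable def lamseq (k : ℕ) : ℝ := 1/((k:ℝ)+1)

lemma lamseq_pos (k : ℕ) : 0 < lamseq k := by unfold lamseq; positivity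

lemma lamseq_anti : Antitone lamseq := by
  intro i j hij
  unfold lamseq
  have : ((i:ℝ)+1) ≤ ((j:ℝ)+1) := by exact_mod_cast Nat.succ_le_succ hij
  gcongr

lemma lamseq_tendsto : Tendsto lamseq atTop (𝓝 0) :=
  tendsto_one_div_add_atTop_nhds_zero_nat

/-- If the Ymax family along `lamseq` is pointwise bounded, its supremum is a global
maximizer of `D`. -/
lemma Nice.iSup_Ymax_isMaxD (hD : Nice D p)
    (hbdd : BddAbove (Set.range fun k : ℕ => Ymax D p (lamseq k))) :
    ∀ z, 0 ≤ z → D z ≤ D (⨆ k : ℕ, Ymax D p (lamseq k)) := by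
  set A := ⨆ k : ℕ, Ymax D p (lamseq k) with hA
  have hlk : ∀ k : ℕ, (0:ℝ) < lamseq k := lamseq_pos
  have hk_le : ∀ k, Ymax D p (lamseq k) ≤ A := fun k => le_ciSup hbdd k
  have hA_nonneg : 0 ≤ A := le_trans (hD.Ymax_nonneg (hlk 0)) (hk_le 0)
  intro z hz
  have key : ∀ k : ℕ, p * D z - lamseq k * z ≤ p * D A := by
    intro k
    have h1 := (hD.Ymax_mem (hlk k)).2 z hz
    rw [gfun_of_nonneg hz, gfun_of_nonneg (hD.Ymax_nonneg (hlk k))] at h1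
    have h2 : D (Ymax D p (lamseq k)) ≤ D A :=
      hD.mono (hD.Ymax_nonneg (hlk k)) hA_nonneg (hk_le k)
    have h3 : (0:ℝ) ≤ lamseq k * Ymax D p (lamseq k) :=
      mul_nonneg (hlk k).le (hD.Ymax_nonneg (hlk k))
    nlinarith [hD.ppos]
  have hL : Tendsto (fun k : ℕ => p * D z - lamseq k * z) atTop (𝓝 (p * D z)) := by
    have := tendsto_const_nhds (x := p * D z) (f := atTop (α := ℕ)) |>.sub
      (lamseq_tendsto.mul (tendsto_const_nhds (x := z)))
    simpa using this
  have := le_of_tendsto hL (Eventually.of_forall key)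
  have hp := hD.ppos
  nlinarith

end SearchPlan
namespace SearchPlan

/-- The data of the continuous search problem (with `n ≥ 1`). -/
structure Setting (n : ℕ) where
  hn : 0 < n
  X : Set (Fin n → ℝ)
  π : (Fin n → ℝ) → ℝ
  d : (Fin n → ℝ) → ℝ → ℝ
  hX : MeasurableSet X
  hπmeas : Measurable π
  hdmeas : Measurable (Function.uncurry d)
  hnice : ∀ x ∈ X, Nice (d x) (π x)
  hπzero : ∀ x ∉ X, π x = 0
  hπint : ∫ x, π x = 1

namespace Setting

variable {n : ℕ} (S : Setting n)

lemma π_nonneg : ∀ x, 0 ≤ S.π x := by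
  intro x
  by_cases hx : x ∈ S.X
  · exact ((S.hnice x hx).ppos).le
  · rw [S.hπzero x hx]

lemma π_integrable : Integrable S.π := by
  by_contra h
  have h2 := S.hπint
  rw [integral_undef h] at h2
  norm_num at h2

lemma π_setint : ∫ x in S.X, S.π x = 1 := by
  have h1 : ∫ x in S.X, S.π x = ∫ x, S.π x := by
    apply setIntegral_eq_integral_of_forall_compl_eq_zero
    intro x hx
    exact S.hπzero x hx
  rw [h1, S.hπint]

lemma π_integrableOn : IntegrableOn S.π S.X := S.π_integrable.integrableOn

/-- canonical largest and smallest maximizer allocations -/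
noncomputable def Yb (lam : ℝ) (x : Fin n → ℝ) : ℝ := YY (S.d x) (S.π x) lam
noncomputable def Wb (lam : ℝ) (x : Fin n → ℝ) : ℝ := WW (S.d x) (S.π x) lam

lemma Yb_eq {lam : ℝ} (hl : 0 < lam) {x : Fin n → ℝ} (hx : x ∈ S.X) :
    S.Yb lam x = Ymax (S.d x) (S.π x) lam := (S.hnice x hx).YY_eq hl

lemma Wb_eq {lam : ℝ} (hl : 0 < lam) {x : Fin n → ℝ} (hx : x ∈ S.X) :
    S.Wb lam x = Ymin (S.d x) (S.π x) lam := (S.hnice x hx).WW_eq hl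

lemma meas_gfun (lam c : ℝ) : Measurable fun x => gfun (S.d x) (S.π x) lam c := by
  unfold gfun
  have h1 : Measurable fun x => S.d x (max c 0) :=
    S.hdmeas.comp (measurable_id.prodMk measurable_const)
  exact (S.hπmeas.mul h1).sub measurable_const

lemma meas_LL (lam : ℝ) : Measurable fun x => LL (S.d x) (S.π x) lam := by
  unfold LL
  exact Measurable.iSup (fun q => S.meas_gfun lam q)

lemma meas_SS (lam : ℝ) (r : ℝ) : Measurable fun x => SS (S.d x) (S.π x) lam r := by
  unfold SS
  exact Measurable.iSup (fun q => S.meas_gfun lam _)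

lemma meas_TT (lam : ℝ) (r : ℝ) : Measurable fun x => TT (S.d x) (S.π x) lam r := by
  unfold TT
  exact Measurable.iSup (fun q => S.meas_gfun lam _)

lemma meas_Yb (lam : ℝ) : Measurable (S.Yb lam) := by
  unfold Yb YY
  refine Measurable.iSup (fun q => ?_)
  refine Measurable.ite ?_ measurable_const measurable_const
  exact measurableSet_eq_fun (S.meas_SS lam q) (S.meas_LL lam)

lemma meas_Wb (lam : ℝ) : Measurable (S.Wb lam) := by
  unfold Wb WW
  refine Measurable.iInf (fun q => ?_)
  refine Measurable.ite ?_ measurable_const ?_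
  · exact measurableSet_eq_fun (S.meas_TT lam q) (S.meas_LL lam)
  · exact (S.hπmeas.div_const lam).add_const 1

lemma Yb_nonneg {lam : ℝ} (hl : 0 < lam) {x : Fin n → ℝ} (hx : x ∈ S.X) :
    0 ≤ S.Yb lam x := by
  rw [S.Yb_eq hl hx]; exact (S.hnice x hx).Ymax_nonneg hl

lemma Wb_nonneg {lam : ℝ} (hl : 0 < lam) {x : Fin n → ℝ} (hx : x ∈ S.X) :
    0 ≤ S.Wb lam x := by
  rw [S.Wb_eq hl hx]; exact (S.hnice x hx).Ymin_nonneg hl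

lemma Wb_le_Yb {lam : ℝ} (hl : 0 < lam) {x : Fin n → ℝ} (hx : x ∈ S.X) :
    S.Wb lam x ≤ S.Yb lam x := by
  rw [S.Yb_eq hl hx, S.Wb_eq hl hx]; exact (S.hnice x hx).Ymin_le_Ymax hl

lemma Yb_le {lam : ℝ} (hl : 0 < lam) {x : Fin n → ℝ} (hx : x ∈ S.X) :
    S.Yb lam x ≤ S.π x / lam := by
  rw [S.Yb_eq hl hx]; exact (S.hnice x hx).Ymax_le hl

lemma int_Yb {lam : ℝ} (hl : 0 < lam) : IntegrableOn (S.Yb lam) S.X := by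
  refine Integrable.mono' ((S.π_integrableOn).div_const lam) (S.meas_Yb lam).aestronglyMeasurable ?_
  filter_upwards [ae_restrict_mem S.hX] with x hx
  rw [Real.norm_eq_abs, abs_of_nonneg (S.Yb_nonneg hl hx)]
  exact S.Yb_le hl hx

lemma int_Wb {lam : ℝ} (hl : 0 < lam) : IntegrableOn (S.Wb lam) S.X := by
  refine Integrable.mono' ((S.π_integrableOn).div_const lam) (S.meas_Wb lam).aestronglyMeasurable ?_
  filter_upwards [ae_restrict_mem S.hX] with x hx
  rw [Real.norm_eq_abs, abs_of_nonneg (S.Wb_nonneg hl hx)]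
  exact le_trans (S.Wb_le_Yb hl hx) (S.Yb_le hl hx)

/-- total effort of the largest/smallest maximizer allocations -/
noncomputable def CC (lam : ℝ) : ℝ := ∫ x in S.X, S.Yb lam x
noncomputable def cc (lam : ℝ) : ℝ := ∫ x in S.X, S.Wb lam x

lemma cc_le_CC {lam : ℝ} (hl : 0 < lam) : S.cc lam ≤ S.CC lam := by
  refine setIntegral_mono_on (S.int_Wb hl) (S.int_Yb hl) S.hX ?_
  intro x hx
  exact S.Wb_le_Yb hl hx

lemma CC_nonneg {lam : ℝ} (hl : 0 < lam) : 0 ≤ S.CC lam :=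
  setIntegral_nonneg S.hX (fun x hx => S.Yb_nonneg hl hx)

lemma cc_nonneg {lam : ℝ} (hl : 0 < lam) : 0 ≤ S.cc lam :=
  setIntegral_nonneg S.hX (fun x hx => S.Wb_nonneg hl hx)

lemma CC_le_inv {lam : ℝ} (hl : 0 < lam) : S.CC lam ≤ 1 / lam := by
  have h1 : S.CC lam ≤ ∫ x in S.X, S.π x / lam := by
    refine setIntegral_mono_on (S.int_Yb hl) ((S.π_integrableOn).div_const lam) S.hX ?_
    intro x hx
    exact S.Yb_le hl hx
  rw [integral_div, S.π_setint] at h1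
  exact h1

lemma CC_le_cc_of_lt {lam1 lam2 : ℝ} (h1 : 0 < lam1) (hlt : lam1 < lam2) :
    S.CC lam2 ≤ S.cc lam1 := by
  refine setIntegral_mono_on (S.int_Yb (h1.trans hlt)) (S.int_Wb h1) S.hX ?_
  intro x hx
  rw [S.Yb_eq (h1.trans hlt) hx, S.Wb_eq h1 hx]
  exact (S.hnice x hx).Ymax_le_Ymin_of_lt h1 hlt

lemma CC_anti {lam1 lam2 : ℝ} (h1 : 0 < lam1) (hle : lam1 ≤ lam2) :
    S.CC lam2 ≤ S.CC lam1 := by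
  rcases eq_or_lt_of_le hle with rfl | hlt
  · exact le_rfl
  · exact le_trans (S.CC_le_cc_of_lt h1 hlt) (S.cc_le_CC h1)

lemma tendsto_CC_desc {lam : ℝ} (hlam : 0 < lam) {l : ℕ → ℝ}
    (hl : ∀ k, lam < l k) (hanti : Antitone l) (hto : Tendsto l atTop (𝓝 lam)) :
    Tendsto (fun k => S.CC (l k)) atTop (𝓝 (S.cc lam)) := by
  have hlk : ∀ k, 0 < l k := fun k => hlam.trans (hl k)
  refine integral_tendsto_of_tendsto_of_monotone
    (fun k => S.int_Yb (hlk k)) (S.int_Wb hlam) ?_ ?_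
  · filter_upwards [ae_restrict_mem S.hX] with x hx
    intro i j hij
    dsimp only
    rw [S.Yb_eq (hlk i) hx, S.Yb_eq (hlk j) hx]
    exact (((S.hnice x hx).tendsto_Ymax_desc hlam hl hanti hto).1) hij
  · filter_upwards [ae_restrict_mem S.hX] with x hx
    have h2 := ((S.hnice x hx).tendsto_Ymax_desc hlam hl hanti hto).2
    rw [S.Wb_eq hlam hx]
    refine h2.congr (fun k => ?_)
    rw [S.Yb_eq (hlk k) hx]

lemma tendsto_cc_asc {lam : ℝ} (hlam : 0 < lam) {l : ℕ → ℝ}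
    (hl : ∀ k, 0 < l k) (hl2 : ∀ k, l k < lam) (hmono : Monotone l)
    (hto : Tendsto l atTop (𝓝 lam)) :
    Tendsto (fun k => S.cc (l k)) atTop (𝓝 (S.CC lam)) := by
  refine integral_tendsto_of_tendsto_of_antitone
    (fun k => S.int_Wb (hl k)) (S.int_Yb hlam) ?_ ?_
  · filter_upwards [ae_restrict_mem S.hX] with x hx
    intro i j hij
    dsimp only
    rw [S.Wb_eq (hl i) hx, S.Wb_eq (hl j) hx]
    exact (((S.hnice x hx).tendsto_Ymin_asc hlam hl hl2 hmono hto).1) hij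
  · filter_upwards [ae_restrict_mem S.hX] with x hx
    have h2 := ((S.hnice x hx).tendsto_Ymin_asc hlam hl hl2 hmono hto).2
    rw [S.Yb_eq hlam hx]
    refine h2.congr (fun k => ?_)
    rw [S.Wb_eq (hl k) hx]

/-- The critical multiplier for effort level `s`. -/
noncomputable def lamstar (s : ℝ) : ℝ := sInf {lam | 0 < lam ∧ S.CC lam ≤ s}

lemma Eset_nonempty {s : ℝ} (hs : 0 < s) :
    {lam | 0 < lam ∧ S.CC lam ≤ s}.Nonempty := by
  refine ⟨max 1 (1/s), by positivity, ?_⟩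
  have h1 : 0 < max 1 (1/s) := by positivity
  refine le_trans (S.CC_le_inv h1) ?_
  rw [div_le_iff₀ h1]
  have h2 : 1/s ≤ max 1 (1/s) := le_max_right _ _
  rw [div_le_iff₀ hs] at h2
  nlinarith [h2]

lemma lamstar_spec {s : ℝ} (hs : 0 < s) {lam0 : ℝ} (hlam0 : 0 < lam0)
    (hadm : s < S.CC lam0) :
    0 < S.lamstar s ∧ S.cc (S.lamstar s) ≤ s ∧ s ≤ S.CC (S.lamstar s) := by
  set E := {lam | 0 < lam ∧ S.CC lam ≤ s} with hE
  have hlamE : S.lamstar s = sInf E := rfl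
  have hne : E.Nonempty := S.Eset_nonempty hs
  have hlb : ∀ lam ∈ E, lam0 ≤ lam := by
    intro lam hlam
    by_contra hcon
    push_neg at hcon
    have h1 : S.CC lam0 ≤ S.CC lam := S.CC_anti hlam.1 hcon.le
    linarith [hlam.2]
  have hbdd : BddBelow E := ⟨lam0, hlb⟩
  have hls : lam0 ≤ S.lamstar s := le_csInf hne hlb
  have hpos : 0 < S.lamstar s := lt_of_lt_of_le hlam0 hls
  refine ⟨hpos, ?_, ?_⟩
  · -- cc (lamstar) ≤ s via limit from the right
    have hCCle : ∀ μ, S.lamstar s < μ → S.CC μ ≤ s := by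
      intro μ hμ
      obtain ⟨e, heE, he⟩ := exists_lt_of_csInf_lt hne hμ
      exact le_trans (S.CC_anti heE.1 he.le) heE.2
    set l := fun k => S.lamstar s + lamseq k with hldef
    have h1 : ∀ k, S.lamstar s < l k := fun k => lt_add_of_pos_right _ (lamseq_pos k)
    have h2 : Antitone l := fun i j hij => by
      simp only [hldef]
      linarith [lamseq_anti hij]
    have h3 : Tendsto l atTop (𝓝 (S.lamstar s)) := by
      have := tendsto_const_nhds (x := S.lamstar s) (f := atTop (α := ℕ)) |>.add lamseq_tendsto
      simpa using this
    have h4 := S.tendsto_CC_desc hpos h1 h2 h3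
    exact le_of_tendsto h4 (Eventually.of_forall (fun k => hCCle _ (h1 k)))
  · -- s ≤ CC (lamstar) via limit from the left
    have hCCgt : ∀ μ, 0 < μ → μ < S.lamstar s → s < S.CC μ := by
      intro μ hμ hμ2
      by_contra hcon
      push_neg at hcon
      have hmem : μ ∈ E := ⟨hμ, hcon⟩
      have := csInf_le hbdd hmem
      rw [← hlamE] at this
      linarith
    set l := fun k : ℕ => S.lamstar s * (1 - 1/((k:ℝ)+2)) with hldef
    have hfrac : ∀ k : ℕ, 0 < 1 - 1/((k:ℝ)+2) := by
      intro k
      have h1 : 1/((k:ℝ)+2) < 1 := by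
        rw [div_lt_one (by positivity)]
        linarith [Nat.cast_nonneg (α := ℝ) k]
      linarith
    have hfrac2 : ∀ k : ℕ, 1 - 1/((k:ℝ)+2) < 1 := by
      intro k
      have : 0 < 1/((k:ℝ)+2) := by positivity
      linarith
    have h1 : ∀ k, 0 < l k := fun k => mul_pos hpos (hfrac k)
    have h2 : ∀ k, l k < S.lamstar s := by
      intro k
      calc l k < S.lamstar s * 1 := by
            exact (mul_lt_mul_iff_right₀ hpos).2 (hfrac2 k)
      _ = S.lamstar s := mul_one _
    have h3 : Monotone l := by
      intro i j hij
      simp only [hldef]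
      have : 1/((j:ℝ)+2) ≤ 1/((i:ℝ)+2) := by
        apply one_div_le_one_div_of_le (by positivity)
        have : (i:ℝ) ≤ (j:ℝ) := by exact_mod_cast hij
        linarith
      nlinarith [hpos]
    have h4 : Tendsto l atTop (𝓝 (S.lamstar s)) := by
      have hz : Tendsto (fun k : ℕ => 1/((k:ℝ)+2)) atTop (𝓝 0) := by
        have h1 : Tendsto (fun k : ℕ => (k:ℝ)+2) atTop atTop :=
          tendsto_atTop_add_const_right _ 2 tendsto_natCast_atTop_atTop
        have := tendsto_inv_atTop_zero.comp h1
        simpa [one_div, Function.comp_def] using this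
      have := tendsto_const_nhds (x := S.lamstar s) (f := atTop (α := ℕ)) |>.mul
        ((tendsto_const_nhds (x := (1:ℝ))).sub hz)
      simp only [hldef]
      simpa [one_div] using this
    have h5 := S.tendsto_cc_asc hpos h1 h2 h3 h4
    refine ge_of_tendsto h5 (Eventually.of_forall (fun k => ?_))
    have hmid1 : l k < (l k + S.lamstar s)/2 := by linarith [h2 k]
    have hmid2 : (l k + S.lamstar s)/2 < S.lamstar s := by linarith [h2 k]
    have hmid0 : 0 < (l k + S.lamstar s)/2 := by linarith [h1 k]
    have := hCCgt _ hmid0 hmid2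
    have h6 := S.CC_le_cc_of_lt (h1 k) hmid1
    linarith

lemma lamstar_anti {s1 s2 : ℝ} (hs1 : 0 < s1) (h12 : s1 ≤ s2) :
    S.lamstar s2 ≤ S.lamstar s1 := by
  apply csInf_le_csInf
  · exact ⟨0, fun lam hlam => hlam.1.le⟩
  · exact S.Eset_nonempty hs1
  · intro lam hlam
    exact ⟨hlam.1, le_trans hlam.2 h12⟩

end Setting
end SearchPlan
namespace SearchPlan
namespace Setting

variable {n : ℕ} (S : Setting n)

/-- coordinate used for sweeping -/
def i0 : Fin n := ⟨0, S.hn⟩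

/-- interpolated allocation between `Wb` and `Yb`, switching on a half-space -/
noncomputable def itp (lam c : ℝ) (x : Fin n → ℝ) : ℝ :=
  if S.Wb lam x < S.Yb lam x ∧ x S.i0 ≤ c then S.Yb lam x else S.Wb lam x

lemma meas_itp (lam c : ℝ) : Measurable (S.itp lam c) := by
  unfold itp
  have h1 : MeasurableSet {x : Fin n → ℝ | S.Wb lam x < S.Yb lam x ∧ x S.i0 ≤ c} := by
    have h2 : MeasurableSet {x : Fin n → ℝ | S.Wb lam x < S.Yb lam x} :=
      measurableSet_lt (S.meas_Wb lam) (S.meas_Yb lam)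
    have h3 : MeasurableSet {x : Fin n → ℝ | x S.i0 ≤ c} :=
      measurableSet_le (measurable_pi_apply S.i0) measurable_const
    exact h2.inter h3
  exact Measurable.ite h1 (S.meas_Yb lam) (S.meas_Wb lam)

lemma Wb_le_itp {lam : ℝ} (c : ℝ) (hl : 0 < lam) {x : Fin n → ℝ} (hx : x ∈ S.X) :
    S.Wb lam x ≤ S.itp lam c x := by
  unfold itp
  split_ifs with h
  · exact S.Wb_le_Yb hl hx
  · exact le_rfl

lemma itp_le_Yb {lam : ℝ} (c : ℝ) (hl : 0 < lam) {x : Fin n → ℝ} (hx : x ∈ S.X) :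
    S.itp lam c x ≤ S.Yb lam x := by
  unfold itp
  split_ifs with h
  · exact le_rfl
  · exact S.Wb_le_Yb hl hx

lemma itp_nonneg {lam : ℝ} (c : ℝ) (hl : 0 < lam) {x : Fin n → ℝ} (hx : x ∈ S.X) :
    0 ≤ S.itp lam c x := le_trans (S.Wb_nonneg hl hx) (S.Wb_le_itp c hl hx)

lemma itp_mem_pair (lam c : ℝ) (x : Fin n → ℝ) :
    S.itp lam c x = S.Yb lam x ∨ S.itp lam c x = S.Wb lam x := by
  unfold itp
  split_ifs with h
  · exact Or.inl rfl
  · exact Or.inr rfl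

lemma itp_mono_c {lam : ℝ} (hl : 0 < lam) {c c' : ℝ} (hcc : c ≤ c') {x : Fin n → ℝ}
    (hx : x ∈ S.X) : S.itp lam c x ≤ S.itp lam c' x := by
  unfold itp
  split_ifs with h1 h2 h2
  · exact le_rfl
  · exact absurd ⟨h1.1, h1.2.trans hcc⟩ h2
  · exact S.Wb_le_Yb hl hx
  · exact le_rfl

lemma int_itp {lam : ℝ} (hl : 0 < lam) (c : ℝ) : IntegrableOn (S.itp lam c) S.X := by
  refine Integrable.mono' (S.int_Yb hl) (S.meas_itp lam c).aestronglyMeasurable ?_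
  filter_upwards [ae_restrict_mem S.hX] with x hx
  rw [Real.norm_eq_abs, abs_of_nonneg (S.itp_nonneg c hl hx)]
  exact S.itp_le_Yb c hl hx

/-- total effort of the interpolated allocation -/
noncomputable def mfun (lam c : ℝ) : ℝ := ∫ x in S.X, S.itp lam c x

lemma mfun_mono {lam : ℝ} (hl : 0 < lam) : Monotone (S.mfun lam) := by
  intro c c' hcc
  exact setIntegral_mono_on (S.int_itp hl c) (S.int_itp hl c') S.hX
    (fun x hx => S.itp_mono_c hl hcc hx)

lemma hyperplane_null (c : ℝ) :
    (volume : Measure (Fin n → ℝ)) {x | x S.i0 = c} = 0 := by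
  rw [volume_pi]
  exact MeasureTheory.Measure.pi_hyperplane (fun _ => (volume : Measure ℝ)) S.i0 c

lemma hyperplane_null_restrict (c : ℝ) :
    (volume.restrict S.X) {x | x S.i0 = c} = 0 := by
  have h1 : MeasurableSet {x : Fin n → ℝ | x S.i0 = c} :=
    measurableSet_eq_fun (measurable_pi_apply S.i0) measurable_const
  rw [Measure.restrict_apply h1]
  exact measure_mono_null Set.inter_subset_left (S.hyperplane_null c)

lemma tendsto_mfun_seq {lam : ℝ} (hl : 0 < lam) {u : ℕ → ℝ} {c : ℝ}
    (hu : Tendsto u atTop (𝓝 c)) :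
    Tendsto (fun k => S.mfun lam (u k)) atTop (𝓝 (S.mfun lam c)) := by
  unfold mfun
  refine tendsto_integral_of_dominated_convergence (S.Yb lam)
    (fun k => (S.meas_itp lam (u k)).aestronglyMeasurable) (S.int_Yb hl) ?_ ?_
  · intro k
    filter_upwards [ae_restrict_mem S.hX] with x hx
    rw [Real.norm_eq_abs, abs_of_nonneg (S.itp_nonneg (u k) hl hx)]
    exact S.itp_le_Yb (u k) hl hx
  · have hnull : ∀ᵐ x ∂volume.restrict S.X, x S.i0 ≠ c := by
      rw [ae_iff]
      convert S.hyperplane_null_restrict c using 2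
      ext x; simp
    filter_upwards [ae_restrict_mem S.hX, hnull] with x hx hxc
    by_cases hWY : S.Wb lam x < S.Yb lam x
    · rcases lt_or_gt_of_ne hxc with hlt | hgt
      · have hev : ∀ᶠ k in atTop, S.itp lam (u k) x = S.Yb lam x := by
          filter_upwards [hu.eventually (eventually_gt_nhds hlt)] with k hk
          unfold itp
          rw [if_pos ⟨hWY, hk.le⟩]
        have hc : S.itp lam c x = S.Yb lam x := by
          unfold itp
          rw [if_pos ⟨hWY, hlt.le⟩]
        rw [hc]
        exact tendsto_const_nhds.congr' (hev.mono (fun k hk => hk.symm))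
      · have hev : ∀ᶠ k in atTop, S.itp lam (u k) x = S.Wb lam x := by
          filter_upwards [hu.eventually (eventually_lt_nhds hgt)] with k hk
          unfold itp
          rw [if_neg]
          rintro ⟨-, h2⟩
          exact absurd (lt_of_le_of_lt h2 hk) (lt_irrefl _)
        have hc : S.itp lam c x = S.Wb lam x := by
          unfold itp
          rw [if_neg]
          rintro ⟨-, h2⟩
          exact absurd (lt_of_le_of_lt h2 hgt) (lt_irrefl _)
        rw [hc]
        exact tendsto_const_nhds.congr' (hev.mono (fun k hk => hk.symm))
    · have hconst : ∀ c' , S.itp lam c' x = S.Wb lam x := by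
        intro c'
        unfold itp
        rw [if_neg]
        rintro ⟨h1, -⟩
        exact hWY h1
      simp only [hconst]
      exact tendsto_const_nhds

lemma tendsto_mfun_bot {lam : ℝ} (hl : 0 < lam) :
    Tendsto (fun k : ℕ => S.mfun lam (-(k:ℝ))) atTop (𝓝 (S.cc lam)) := by
  unfold mfun cc
  refine tendsto_integral_of_dominated_convergence (S.Yb lam)
    (fun k => (S.meas_itp lam _).aestronglyMeasurable) (S.int_Yb hl) ?_ ?_
  · intro k
    filter_upwards [ae_restrict_mem S.hX] with x hx
    rw [Real.norm_eq_abs, abs_of_nonneg (S.itp_nonneg _ hl hx)]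
    exact S.itp_le_Yb _ hl hx
  · filter_upwards [ae_restrict_mem S.hX] with x hx
    have hev : ∀ᶠ k : ℕ in atTop, S.itp lam (-(k:ℝ)) x = S.Wb lam x := by
      have h1 : Tendsto (fun k : ℕ => -(k:ℝ)) atTop atBot := by
        have h0 := tendsto_natCast_atTop_atTop (R := ℝ)
        exact tendsto_neg_atBot_iff.2 h0
      filter_upwards [h1.eventually (eventually_lt_atBot (x S.i0))] with k hk
      unfold itp
      rw [if_neg]
      rintro ⟨-, h2⟩
      exact absurd (lt_of_le_of_lt h2 hk) (lt_irrefl _)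
    exact tendsto_const_nhds.congr' (hev.mono (fun k hk => hk.symm))

lemma tendsto_mfun_top {lam : ℝ} (hl : 0 < lam) :
    Tendsto (fun k : ℕ => S.mfun lam (k:ℝ)) atTop (𝓝 (S.CC lam)) := by
  unfold mfun CC
  refine tendsto_integral_of_dominated_convergence (S.Yb lam)
    (fun k => (S.meas_itp lam _).aestronglyMeasurable) (S.int_Yb hl) ?_ ?_
  · intro k
    filter_upwards [ae_restrict_mem S.hX] with x hx
    rw [Real.norm_eq_abs, abs_of_nonneg (S.itp_nonneg _ hl hx)]
    exact S.itp_le_Yb _ hl hx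
  · filter_upwards [ae_restrict_mem S.hX] with x hx
    by_cases hWY : S.Wb lam x < S.Yb lam x
    · have hev : ∀ᶠ k : ℕ in atTop, S.itp lam (k:ℝ) x = S.Yb lam x := by
        have h1 : Tendsto (fun k : ℕ => (k:ℝ)) atTop atTop := tendsto_natCast_atTop_atTop
        filter_upwards [h1.eventually (eventually_ge_atTop (x S.i0))] with k hk
        unfold itp
        rw [if_pos ⟨hWY, hk⟩]
      exact tendsto_const_nhds.congr' (hev.mono (fun k hk => hk.symm))
    · have heq : S.Wb lam x = S.Yb lam x :=
        le_antisymm (S.Wb_le_Yb hl hx) (not_lt.1 hWY)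
      have hconst : ∀ c' , S.itp lam c' x = S.Yb lam x := by
        intro c'
        unfold itp
        split_ifs with h
        · rfl
        · exact heq
      simp only [hconst]
      exact tendsto_const_nhds

/-- the sweeping threshold for effort level `s` at multiplier `lam`. -/
noncomputable def cstar (lam s : ℝ) : ℝ := sInf {c | s ≤ S.mfun lam c}

lemma cstar_spec {lam s : ℝ} (hl : 0 < lam) (h1 : S.cc lam < s) (h2 : s < S.CC lam) :
    S.mfun lam (S.cstar lam s) = s := by
  set A := {c | s ≤ S.mfun lam c} with hA
  have hne : A.Nonempty := by
    have := (S.tendsto_mfun_top hl).eventually (eventually_ge_nhds h2)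
    obtain ⟨k, hk⟩ := this.exists
    exact ⟨(k:ℝ), hk⟩
  obtain ⟨k0, hk0⟩ := ((S.tendsto_mfun_bot hl).eventually (eventually_lt_nhds h1)).exists
  have hlb : ∀ c ∈ A, -(k0:ℝ) < c := by
    intro c hc
    by_contra hcon
    push_neg at hcon
    have := S.mfun_mono hl hcon
    have hcA : s ≤ S.mfun lam c := hc
    linarith
  have hbdd : BddBelow A := ⟨-(k0:ℝ), fun c hc => (hlb c hc).le⟩
  have hclosed : IsClosed A := by
    have hcont : Continuous (S.mfun lam) := by
      rw [continuous_iff_seqContinuous]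
      intro u c hu
      exact S.tendsto_mfun_seq hl hu
    exact isClosed_le continuous_const hcont
  have hmem : S.cstar lam s ∈ A := hclosed.csInf_mem hne hbdd
  refine le_antisymm ?_ hmem
  -- mfun cstar ≤ s via left approach
  have hlt : ∀ c, c < S.cstar lam s → S.mfun lam c < s := by
    intro c hc
    by_contra hcon
    push_neg at hcon
    have : S.cstar lam s ≤ c := csInf_le hbdd hcon
    linarith
  have hseq : Tendsto (fun k => S.cstar lam s - lamseq k) atTop (𝓝 (S.cstar lam s)) := by
    have := tendsto_const_nhds (x := S.cstar lam s) (f := atTop (α := ℕ)) |>.sub lamseq_tendsto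
    simpa using this
  have := S.tendsto_mfun_seq hl hseq
  refine le_of_tendsto this (Eventually.of_forall (fun k => ?_))
  exact (hlt _ (by linarith [lamseq_pos k])).le

lemma cstar_mono {lam s s' : ℝ} (hl : 0 < lam) (hss : s ≤ s') (h2 : s' < S.CC lam)
    (h1 : S.cc lam < s) : S.cstar lam s ≤ S.cstar lam s' := by
  refine csInf_le_csInf ?_ ?_ (fun c hc => le_trans hss hc)
  · obtain ⟨k0, hk0⟩ := ((S.tendsto_mfun_bot hl).eventually
      (eventually_lt_nhds h1)).exists
    refine ⟨-(k0:ℝ), fun c hc => ?_⟩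
    by_contra hcon
    push_neg at hcon
    have hmono := S.mfun_mono hl hcon.le
    have hcA : s ≤ S.mfun lam c := hc
    linarith
  · have := (S.tendsto_mfun_top hl).eventually (eventually_ge_nhds h2)
    obtain ⟨k, hk⟩ := this.exists
    exact ⟨(k:ℝ), hk⟩

end Setting
end SearchPlan
namespace SearchPlan
namespace Setting

open scoped Classical

variable {n : ℕ} (S : Setting n)

/-- admissible effort level: some multiplier's full effort exceeds it -/
def adm (s : ℝ) : Prop := ∃ lam0, 0 < lam0 ∧ s < S.CC lam0

lemma adm_mono {s s' : ℝ} (h : s ≤ s') (ha : S.adm s') : S.adm s := by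
  obtain ⟨lam0, h1, h2⟩ := ha
  exact ⟨lam0, h1, lt_of_le_of_lt h h2⟩

/-- branch selection at a fixed multiplier -/
noncomputable def bsel (lam s : ℝ) (x : Fin n → ℝ) : ℝ :=
  if s ≤ S.cc lam then S.Wb lam x
  else if S.CC lam ≤ s then S.Yb lam x
  else S.itp lam (S.cstar lam s) x

lemma meas_bsel (lam s : ℝ) : Measurable (S.bsel lam s) := by
  unfold bsel
  split_ifs with h1 h2
  · exact S.meas_Wb _
  · exact S.meas_Yb _
  · exact S.meas_itp _ _

lemma bsel_between {lam s : ℝ} {x : Fin n → ℝ} (hx : x ∈ S.X) (hl : 0 < lam) :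
    S.Wb lam x ≤ S.bsel lam s x ∧ S.bsel lam s x ≤ S.Yb lam x := by
  unfold bsel
  split_ifs with h1 h2
  · exact ⟨le_rfl, S.Wb_le_Yb hl hx⟩
  · exact ⟨S.Wb_le_Yb hl hx, le_rfl⟩
  · exact ⟨S.Wb_le_itp _ hl hx, S.itp_le_Yb _ hl hx⟩

lemma bsel_maximizer {lam s : ℝ} {x : Fin n → ℝ} (hx : x ∈ S.X) (hl : 0 < lam) :
    S.bsel lam s x ∈ MaxSet (S.d x) (S.π x) lam := by
  have hY : S.Yb lam x ∈ MaxSet (S.d x) (S.π x) lam := by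
    rw [S.Yb_eq hl hx]; exact (S.hnice x hx).Ymax_mem hl
  have hW : S.Wb lam x ∈ MaxSet (S.d x) (S.π x) lam := by
    rw [S.Wb_eq hl hx]; exact (S.hnice x hx).Ymin_mem hl
  unfold bsel
  split_ifs with h1 h2
  · exact hW
  · exact hY
  · rcases S.itp_mem_pair lam (S.cstar lam s) x with h | h
    · rw [h]; exact hY
    · rw [h]; exact hW

lemma bsel_effort {lam s : ℝ} (hl : 0 < lam) (hcc : S.cc lam ≤ s) (hCC : s ≤ S.CC lam) :
    ∫ x in S.X, S.bsel lam s x = s := by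
  unfold bsel
  split_ifs with h1 h2
  · exact le_antisymm hcc h1
  · exact le_antisymm h2 hCC
  · push_neg at h1 h2
    exact S.cstar_spec hl h1 h2

lemma bsel_mono {lam : ℝ} (hl : 0 < lam) {s s' : ℝ} (hss : s ≤ s')
    (hCC' : s' ≤ S.CC lam) {x : Fin n → ℝ} (hx : x ∈ S.X) :
    S.bsel lam s x ≤ S.bsel lam s' x := by
  by_cases h1 : s ≤ S.cc lam
  · refine le_trans ?_ (S.bsel_between (s := s') hx hl).1
    unfold bsel
    rw [if_pos h1]
  · have h1' : ¬ s' ≤ S.cc lam := fun hcon => h1 (le_trans hss hcon)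
    by_cases h2 : S.CC lam ≤ s
    · have h2' : S.CC lam ≤ s' := le_trans h2 hss
      unfold bsel
      rw [if_neg h1, if_neg h1', if_pos h2, if_pos h2']
    · by_cases h2' : S.CC lam ≤ s'
      · unfold bsel
        rw [if_neg h1, if_neg h1', if_neg h2, if_pos h2']
        exact S.itp_le_Yb _ hl hx
      · push_neg at h1 h2 h2'
        have hc := S.cstar_mono hl hss h2' h1
        unfold bsel
        rw [if_neg (not_le.2 h1), if_neg h1', if_neg (not_le.2 h2), if_neg (not_le.2 h2')]
        exact S.itp_mono_c hl hc hx

/-- the allocation family for admissible positive effort levels, guarded to vanish off `X` -/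
noncomputable def FposX (s : ℝ) (x : Fin n → ℝ) : ℝ :=
  if x ∈ S.X then S.bsel (S.lamstar s) s x else 0

lemma meas_FposX (s : ℝ) : Measurable (S.FposX s) :=
  Measurable.ite S.hX (S.meas_bsel _ s) measurable_const

lemma FposX_between {s : ℝ} {x : Fin n → ℝ} (hx : x ∈ S.X) (hl : 0 < S.lamstar s) :
    S.Wb (S.lamstar s) x ≤ S.FposX s x ∧ S.FposX s x ≤ S.Yb (S.lamstar s) x := by
  unfold FposX
  rw [if_pos hx]
  exact S.bsel_between hx hl

lemma FposX_maximizer {s : ℝ} {x : Fin n → ℝ} (hx : x ∈ S.X) (hl : 0 < S.lamstar s) :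
    S.FposX s x ∈ MaxSet (S.d x) (S.π x) (S.lamstar s) := by
  unfold FposX
  rw [if_pos hx]
  exact S.bsel_maximizer hx hl

lemma FposX_nonneg {s : ℝ} (hl : 0 < S.lamstar s) (x : Fin n → ℝ) : 0 ≤ S.FposX s x := by
  by_cases hx : x ∈ S.X
  · exact (S.FposX_maximizer hx hl).1
  · unfold FposX; rw [if_neg hx]

lemma int_FposX {s : ℝ} (hl : 0 < S.lamstar s) : IntegrableOn (S.FposX s) S.X := by
  refine Integrable.mono' (S.int_Yb hl) (S.meas_FposX s).aestronglyMeasurable ?_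
  filter_upwards [ae_restrict_mem S.hX] with x hx
  rw [Real.norm_eq_abs, abs_of_nonneg (S.FposX_nonneg hl x)]
  exact (S.FposX_between hx hl).2

lemma FposX_effort {s : ℝ} (hs : 0 < s) (hadm : S.adm s) :
    ∫ x in S.X, S.FposX s x = s := by
  obtain ⟨lam0, hlam0, hadm'⟩ := hadm
  obtain ⟨hl, hccle, hCCge⟩ := S.lamstar_spec hs hlam0 hadm'
  have h1 : ∫ x in S.X, S.FposX s x = ∫ x in S.X, S.bsel (S.lamstar s) s x :=
    setIntegral_congr_fun S.hX (fun x hx => by unfold FposX; rw [if_pos hx])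
  rw [h1]
  exact S.bsel_effort hl hccle hCCge

lemma FposX_mono {s s' : ℝ} (hs : 0 < s) (hss : s ≤ s') (hadm' : S.adm s')
    (x : Fin n → ℝ) : S.FposX s x ≤ S.FposX s' x := by
  have hs' : 0 < s' := lt_of_lt_of_le hs hss
  have hadm : S.adm s := S.adm_mono hss hadm'
  obtain ⟨lam0, hlam0, hlt0⟩ := hadm
  obtain ⟨lam0', hlam0', hlt0'⟩ := hadm'
  obtain ⟨hl, hccle, hCCge⟩ := S.lamstar_spec hs hlam0 hlt0
  obtain ⟨hl', hccle', hCCge'⟩ := S.lamstar_spec hs' hlam0' hlt0'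
  by_cases hx : x ∈ S.X
  swap
  · unfold FposX; rw [if_neg hx, if_neg hx]
  have hanti : S.lamstar s' ≤ S.lamstar s := S.lamstar_anti hs hss
  rcases eq_or_lt_of_le hanti with heq | hlt
  · unfold FposX
    rw [if_pos hx, if_pos hx, heq]
    rw [heq] at hCCge'
    exact S.bsel_mono hl hss hCCge' hx
  · calc S.FposX s x ≤ S.Yb (S.lamstar s) x := (S.FposX_between hx hl).2
      _ ≤ S.Wb (S.lamstar s') x := by
          rw [S.Yb_eq hl hx, S.Wb_eq hl' hx]
          exact (S.hnice x hx).Ymax_le_Ymin_of_lt hl' hlt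
      _ ≤ S.FposX s' x := (S.FposX_between hx hl').1

end Setting
end SearchPlan
namespace SearchPlan
namespace Setting

open scoped Classical

variable {n : ℕ} (S : Setting n)

/-- Integrability of the detection-value integrand -/
lemma int_val {f : (Fin n → ℝ) → ℝ} (hf : Measurable f)
    (h0 : ∀ᵐ x ∂volume.restrict S.X, 0 ≤ f x) :
    IntegrableOn (fun x => S.d x (f x) * S.π x) S.X := by
  have hmeas : Measurable fun x => S.d x (f x) * S.π x :=
    (S.hdmeas.comp (measurable_id.prodMk hf)).mul S.hπmeas
  refine Integrable.mono' S.π_integrableOn hmeas.aestronglyMeasurable ?_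
  filter_upwards [ae_restrict_mem S.hX, h0] with x hx h0x
  rw [Real.norm_eq_abs, abs_mul, abs_of_nonneg (S.π_nonneg x)]
  have h1 : |S.d x (f x)| ≤ 1 :=
    abs_le.2 ⟨by linarith [(S.hnice x hx).nonneg _ h0x], (S.hnice x hx).le_one _ h0x⟩
  nlinarith [S.π_nonneg x]

/-- Any a.e. pointwise Lagrangian maximizer with the right total effort is optimal. -/
lemma opt_of_maximizer {lam s : ℝ} (hl : 0 < lam) {G : (Fin n → ℝ) → ℝ}
    (hGmeas : Measurable G) (hGint : IntegrableOn G S.X) (hGeff : ∫ x in S.X, G x = s)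
    (hGmax : ∀ᵐ x ∂volume.restrict S.X, G x ∈ MaxSet (S.d x) (S.π x) lam)
    {f : (Fin n → ℝ) → ℝ} (hfmeas : Measurable f) (hfnn : ∀ x, 0 ≤ f x)
    (hfint : IntegrableOn f S.X) (hfeff : ∫ x in S.X, f x = s) :
    ∫ x in S.X, S.d x (f x) * S.π x ≤ ∫ x in S.X, S.d x (G x) * S.π x := by
  have hG0 : ∀ᵐ x ∂volume.restrict S.X, 0 ≤ G x := hGmax.mono (fun x hx => hx.1)
  have hif := S.int_val hfmeas (Eventually.of_forall hfnn)
  have hiG := S.int_val hGmeas hG0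
  have key : ∀ᵐ x ∂volume.restrict S.X,
      S.d x (f x) * S.π x - lam * f x ≤ S.d x (G x) * S.π x - lam * G x := by
    filter_upwards [hGmax] with x hmax
    have h1 := hmax.2 (f x) (hfnn x)
    rw [gfun_of_nonneg (hfnn x), gfun_of_nonneg hmax.1] at h1
    nlinarith [h1]
  have h2 := integral_mono_ae (hif.sub (hfint.const_mul lam))
    (hiG.sub (hGint.const_mul lam)) key
  simp only [Pi.sub_apply] at h2
  rw [integral_sub hif (hfint.const_mul lam), integral_sub hiG (hGint.const_mul lam),
    integral_const_mul, integral_const_mul, hfeff, hGeff] at h2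
  linarith

/-! ### The bounded-total-effort regime -/

/-- supremum of the efficiently usable effort -/
noncomputable def Seff : ℝ := ⨆ k : ℕ, S.CC (lamseq k)

lemma CCseq_mono : Monotone fun k : ℕ => S.CC (lamseq k) :=
  fun i j hij => S.CC_anti (lamseq_pos j) (lamseq_anti hij)

lemma adm_of_lt_Seff (hbdd : BddAbove (Set.range fun k : ℕ => S.CC (lamseq k)))
    {s : ℝ} (h : s < S.Seff) : S.adm s := by
  obtain ⟨k, hk⟩ := (lt_ciSup_iff hbdd).1 h
  exact ⟨lamseq k, lamseq_pos k, hk⟩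

lemma adm_of_not_bdd (h : ¬ BddAbove (Set.range fun k : ℕ => S.CC (lamseq k)))
    (s : ℝ) : S.adm s := by
  obtain ⟨y, ⟨k, rfl⟩, hy⟩ := not_bddAbove_iff.1 h s
  exact ⟨lamseq k, lamseq_pos k, hy⟩

lemma Seff_nonneg (hbdd : BddAbove (Set.range fun k : ℕ => S.CC (lamseq k))) :
    0 ≤ S.Seff :=
  le_trans (S.CC_nonneg (lamseq_pos 0)) (le_ciSup hbdd 0)

/-- points whose maximizer family is unbounded -/
def Nbad : Set (Fin n → ℝ) :=
  {x | ¬ BddAbove (Set.range fun k : ℕ => S.Yb (lamseq k) x)}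

lemma meas_Nbad : MeasurableSet S.Nbad :=
  (measurableSet_bddAbove_range (fun k => S.meas_Yb (lamseq k))).compl

lemma Ybseq_mono {x : Fin n → ℝ} (hx : x ∈ S.X) :
    Monotone fun k : ℕ => S.Yb (lamseq k) x := by
  intro i j hij
  dsimp only
  rw [S.Yb_eq (lamseq_pos i) hx, S.Yb_eq (lamseq_pos j) hx]
  exact (S.hnice x hx).Ymax_antitone (lamseq_pos j) (lamseq_anti hij)

lemma lint_sup_le (hbdd : BddAbove (Set.range fun k : ℕ => S.CC (lamseq k))) :
    ∫⁻ x in S.X, (⨆ k : ℕ, ENNReal.ofReal (S.Yb (lamseq k) x)) ≤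
      ENNReal.ofReal S.Seff := by
  have h1 : ∫⁻ x in S.X, (⨆ k : ℕ, ENNReal.ofReal (S.Yb (lamseq k) x)) =
      ⨆ k : ℕ, ∫⁻ x in S.X, ENNReal.ofReal (S.Yb (lamseq k) x) := by
    refine lintegral_iSup' (fun k => ?_) ?_
    · exact ((S.meas_Yb (lamseq k)).ennreal_ofReal).aemeasurable
    · filter_upwards [ae_restrict_mem S.hX] with x hx
      intro i j hij
      exact ENNReal.ofReal_le_ofReal (S.Ybseq_mono hx hij)
  rw [h1]
  refine iSup_le (fun k => ?_)
  have h2 : ∫⁻ x in S.X, ENNReal.ofReal (S.Yb (lamseq k) x) =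
      ENNReal.ofReal (S.CC (lamseq k)) := by
    rw [← ofReal_integral_eq_lintegral_ofReal (S.int_Yb (lamseq_pos k)) ?_]
    · rfl
    · filter_upwards [ae_restrict_mem S.hX] with x hx
      exact S.Yb_nonneg (lamseq_pos k) hx
  rw [h2]
  exact ENNReal.ofReal_le_ofReal (le_ciSup hbdd k)

lemma Nbad_ae (hbdd : BddAbove (Set.range fun k : ℕ => S.CC (lamseq k))) :
    ∀ᵐ x ∂volume.restrict S.X, x ∉ S.Nbad := by
  have hfin : ∫⁻ x in S.X, (⨆ k : ℕ, ENNReal.ofReal (S.Yb (lamseq k) x)) ≠ ⊤ :=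
    ne_top_of_le_ne_top ENNReal.ofReal_ne_top (S.lint_sup_le hbdd)
  have hae := ae_lt_top' (AEMeasurable.iSup
    (fun k => ((S.meas_Yb (lamseq k)).ennreal_ofReal).aemeasurable)) hfin
  filter_upwards [hae, ae_restrict_mem S.hX] with x hx hxX
  intro hbad
  apply hbad
  refine ⟨(⨆ k : ℕ, ENNReal.ofReal (S.Yb (lamseq k) x)).toReal, ?_⟩
  rintro - ⟨k, rfl⟩
  have h1 : ENNReal.ofReal (S.Yb (lamseq k) x) ≤
      ⨆ k : ℕ, ENNReal.ofReal (S.Yb (lamseq k) x) :=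
    le_iSup (fun k : ℕ => ENNReal.ofReal (S.Yb (lamseq k) x)) k
  have h2 := ENNReal.toReal_mono hx.ne h1
  rwa [ENNReal.toReal_ofReal (S.Yb_nonneg (lamseq_pos k) hxX)] at h2

/-- the asymptotically optimal allocation (for the bounded regime) -/
noncomputable def fmax (x : Fin n → ℝ) : ℝ :=
  if x ∈ S.X ∧ x ∉ S.Nbad then ⨆ k : ℕ, S.Yb (lamseq k) x else 0

lemma meas_fmax : Measurable S.fmax := by
  unfold fmax
  exact Measurable.ite (S.hX.inter S.meas_Nbad.compl)
    (Measurable.iSup (fun k => S.meas_Yb (lamseq k))) measurable_const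

lemma fmax_nonneg (x : Fin n → ℝ) : 0 ≤ S.fmax x := by
  unfold fmax
  split_ifs with h
  · have hbd : BddAbove (Set.range fun k : ℕ => S.Yb (lamseq k) x) := not_not.1 h.2
    exact le_trans (S.Yb_nonneg (lamseq_pos 0) h.1) (le_ciSup hbd 0)
  · exact le_rfl

lemma fmax_ge_Yb {lam : ℝ} (hl : 0 < lam) {x : Fin n → ℝ} (hx : x ∈ S.X)
    (hnb : x ∉ S.Nbad) : S.Yb lam x ≤ S.fmax x := by
  have hbd : BddAbove (Set.range fun k : ℕ => S.Yb (lamseq k) x) := not_not.1 hnb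
  obtain ⟨k, hk⟩ := exists_nat_ge (1/lam)
  have hlk : lamseq k ≤ lam := by
    unfold lamseq
    rw [div_le_iff₀ (by positivity)]
    have h2 : 1/lam ≤ (k:ℝ) := hk
    rw [div_le_iff₀ hl] at h2
    nlinarith
  have h1 : S.Yb lam x ≤ S.Yb (lamseq k) x := by
    rw [S.Yb_eq hl hx, S.Yb_eq (lamseq_pos k) hx]
    exact (S.hnice x hx).Ymax_antitone (lamseq_pos k) hlk
  refine le_trans h1 ?_
  have := le_ciSup hbd k
  unfold fmax
  rw [if_pos ⟨hx, hnb⟩]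
  exact this

lemma fmax_dmax {x : Fin n → ℝ} (hx : x ∈ S.X) (hnb : x ∉ S.Nbad) :
    ∀ z, 0 ≤ z → S.d x z ≤ S.d x (S.fmax x) := by
  have hbd : BddAbove (Set.range fun k : ℕ => S.Yb (lamseq k) x) := not_not.1 hnb
  have hbd' : BddAbove (Set.range fun k : ℕ => Ymax (S.d x) (S.π x) (lamseq k)) := by
    have : (fun k : ℕ => Ymax (S.d x) (S.π x) (lamseq k)) =
        fun k : ℕ => S.Yb (lamseq k) x := by
      funext k
      rw [S.Yb_eq (lamseq_pos k) hx]
    rw [this]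
    exact hbd
  have h1 := (S.hnice x hx).iSup_Ymax_isMaxD hbd'
  have h2 : (⨆ k : ℕ, Ymax (S.d x) (S.π x) (lamseq k)) = S.fmax x := by
    unfold fmax
    rw [if_pos ⟨hx, hnb⟩]
    exact iSup_congr (fun k => (S.Yb_eq (lamseq_pos k) hx).symm)
  rw [h2] at h1
  exact h1

lemma int_fmax (hbdd : BddAbove (Set.range fun k : ℕ => S.CC (lamseq k))) :
    IntegrableOn S.fmax S.X ∧ ∫ x in S.X, S.fmax x = S.Seff := by
  have hofReal : ∀ᵐ x ∂volume.restrict S.X,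
      ENNReal.ofReal (S.fmax x) = ⨆ k : ℕ, ENNReal.ofReal (S.Yb (lamseq k) x) := by
    filter_upwards [ae_restrict_mem S.hX, S.Nbad_ae hbdd] with x hx hnb
    have hbd : BddAbove (Set.range fun k : ℕ => S.Yb (lamseq k) x) := not_not.1 hnb
    have hconv : Tendsto (fun k : ℕ => S.Yb (lamseq k) x) atTop (𝓝 (S.fmax x)) := by
      unfold fmax
      rw [if_pos ⟨hx, hnb⟩]
      exact tendsto_atTop_ciSup (S.Ybseq_mono hx) hbd
    have h1 : Tendsto (fun k : ℕ => ENNReal.ofReal (S.Yb (lamseq k) x)) atTop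
        (𝓝 (ENNReal.ofReal (S.fmax x))) :=
      (ENNReal.continuous_ofReal.tendsto _).comp hconv
    have h2 : Tendsto (fun k : ℕ => ENNReal.ofReal (S.Yb (lamseq k) x)) atTop
        (𝓝 (⨆ k : ℕ, ENNReal.ofReal (S.Yb (lamseq k) x))) := by
      refine tendsto_atTop_iSup ?_
      intro i j hij
      exact ENNReal.ofReal_le_ofReal (S.Ybseq_mono hx hij)
    exact tendsto_nhds_unique h1 h2
  have hint : IntegrableOn S.fmax S.X := by
    rw [IntegrableOn, ← lintegral_ofReal_ne_top_iff_integrable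
      (S.meas_fmax).aestronglyMeasurable ?_]
    · rw [lintegral_congr_ae hofReal]
      exact ne_top_of_le_ne_top ENNReal.ofReal_ne_top (S.lint_sup_le hbdd)
    · exact Eventually.of_forall S.fmax_nonneg
  refine ⟨hint, ?_⟩
  have h1 : Tendsto (fun k : ℕ => S.CC (lamseq k)) atTop (𝓝 (∫ x in S.X, S.fmax x)) := by
    refine integral_tendsto_of_tendsto_of_monotone (fun k => S.int_Yb (lamseq_pos k))
      hint ?_ ?_
    · filter_upwards [ae_restrict_mem S.hX] with x hx
      exact S.Ybseq_mono hx
    · filter_upwards [ae_restrict_mem S.hX, S.Nbad_ae hbdd] with x hx hnb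
      have hbd : BddAbove (Set.range fun k : ℕ => S.Yb (lamseq k) x) := not_not.1 hnb
      unfold fmax
      rw [if_pos ⟨hx, hnb⟩]
      exact tendsto_atTop_ciSup (S.Ybseq_mono hx) hbd
  have h2 : Tendsto (fun k : ℕ => S.CC (lamseq k)) atTop (𝓝 S.Seff) :=
    tendsto_atTop_ciSup S.CCseq_mono hbdd
  exact tendsto_nhds_unique h1 h2

/-- a dump set of positive finite measure inside `X` -/
lemma exists_dump : ∃ A : Set (Fin n → ℝ), MeasurableSet A ∧ A ⊆ S.X ∧
    0 < (volume A).toReal := by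
  have hX0 : volume S.X ≠ 0 := by
    intro h0
    have h1 : ∫ x in S.X, S.π x = 0 := by
      rw [Measure.restrict_eq_zero.2 h0]
      exact integral_zero_measure _
    rw [S.π_setint] at h1
    norm_num at h1
  have hcover : S.X = ⋃ k : ℕ, S.X ∩ Metric.closedBall (0 : Fin n → ℝ) k := by
    ext x
    simp only [Set.mem_iUnion, Set.mem_inter_iff, Metric.mem_closedBall]
    constructor
    · intro hx
      obtain ⟨k, hk⟩ := exists_nat_ge (dist x 0)
      exact ⟨k, hx, hk⟩
    · rintro ⟨k, hk, -⟩
      exact hk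
  have hnz : ∃ k : ℕ, volume (S.X ∩ Metric.closedBall (0 : Fin n → ℝ) k) ≠ 0 := by
    by_contra hcon
    push_neg at hcon
    apply hX0
    rw [hcover]
    exact measure_iUnion_null hcon
  obtain ⟨k, hk⟩ := hnz
  refine ⟨S.X ∩ Metric.closedBall 0 k, S.hX.inter measurableSet_closedBall,
    Set.inter_subset_left, ?_⟩
  refine ENNReal.toReal_pos hk ?_
  have h1 : volume (S.X ∩ Metric.closedBall (0 : Fin n → ℝ) k) ≤
      volume (Metric.closedBall (0 : Fin n → ℝ) k) :=
    measure_mono Set.inter_subset_right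
  exact ne_top_of_le_ne_top (IsCompact.measure_lt_top (isCompact_closedBall _ _)).ne h1

end Setting
end SearchPlan
namespace SearchPlan
namespace Setting

open scoped Classical

variable {n : ℕ} (S : Setting n)

/-- optimality at effort zero -/
lemma opt_zero {f : (Fin n → ℝ) → ℝ} (hfmeas : Measurable f) (hfnn : ∀ x, 0 ≤ f x)
    (hfint : IntegrableOn f S.X) (hfeff : ∫ x in S.X, f x = 0) {G : (Fin n → ℝ) → ℝ}
    (hG0 : ∀ᵐ x ∂volume.restrict S.X, 0 ≤ G x) :
    ∫ x in S.X, S.d x (f x) * S.π x ≤ ∫ x in S.X, S.d x (G x) * S.π x := by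
  have hf0 : f =ᵐ[volume.restrict S.X] 0 :=
    (integral_eq_zero_iff_of_nonneg_ae (Eventually.of_forall hfnn)
      hfint).1 hfeff
  have h1 : ∫ x in S.X, S.d x (f x) * S.π x = 0 := by
    rw [← integral_zero (Fin n → ℝ) ℝ (μ := volume.restrict S.X)]
    refine integral_congr_ae ?_
    filter_upwards [hf0, ae_restrict_mem S.hX] with x hx hxX
    simp only [Pi.zero_apply] at hx ⊢
    rw [hx, (S.hnice x hxX).zero, zero_mul]
  rw [h1]
  refine setIntegral_nonneg_of_ae_restrict ?_
  filter_upwards [hG0, ae_restrict_mem S.hX] with x hx hxX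
  exact mul_nonneg ((S.hnice x hxX).nonneg _ hx) (S.π_nonneg x)

/-- The key construction: a nested family of optimal allocations. -/
lemma main : ∃ F : ℝ → (Fin n → ℝ) → ℝ,
    (∀ s, Measurable (F s)) ∧
    (∀ s x, 0 ≤ F s x) ∧
    (∀ s s' x, 0 ≤ s → s ≤ s' → F s x ≤ F s' x) ∧
    (∀ s, 0 ≤ s → ∫ x in S.X, F s x = s) ∧
    (∀ s, 0 ≤ s → ∀ f : (Fin n → ℝ) → ℝ, Measurable f → (∀ x, 0 ≤ f x) →
      IntegrableOn f S.X → (∫ x in S.X, f x = s) →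
      ∫ x in S.X, S.d x (f x) * S.π x ≤ ∫ x in S.X, S.d x (F s x) * S.π x) := by
  by_cases hbdd : BddAbove (Set.range fun k : ℕ => S.CC (lamseq k))
  case neg =>
    -- unbounded usable effort: the λ-machinery applies at every positive level
    refine ⟨fun s x => if 0 < s then S.FposX s x else 0, ?_, ?_, ?_, ?_, ?_⟩
    · intro s
      by_cases h : 0 < s
      · simp only [if_pos h]; exact S.meas_FposX s
      · simp only [if_neg h]; exact measurable_const
    · intro s x
      by_cases h : 0 < s
      · simp only [if_pos h]
        obtain ⟨lam0, h1, h2⟩ := S.adm_of_not_bdd hbdd s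
        exact S.FposX_nonneg (S.lamstar_spec h h1 h2).1 x
      · simp only [if_neg h]; exact le_rfl
    · intro s s' x hs hss
      by_cases h : 0 < s
      · have h' : 0 < s' := lt_of_lt_of_le h hss
        simp only [if_pos h, if_pos h']
        exact S.FposX_mono h hss (S.adm_of_not_bdd hbdd s') x
      · simp only [if_neg h]
        by_cases h' : 0 < s'
        · simp only [if_pos h']
          obtain ⟨lam0, h1, h2⟩ := S.adm_of_not_bdd hbdd s'
          exact S.FposX_nonneg (S.lamstar_spec h' h1 h2).1 x
        · simp only [if_neg h']; exact le_rfl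
    · intro s hs
      by_cases h : 0 < s
      · simp only [if_pos h]
        exact S.FposX_effort h (S.adm_of_not_bdd hbdd s)
      · simp only [if_neg h]
        rw [integral_zero]
        linarith [not_lt.1 h]
    · intro s hs f hfmeas hfnn hfint hfeff
      by_cases h : 0 < s
      · simp only [if_pos h]
        obtain ⟨lam0, h1, h2⟩ := S.adm_of_not_bdd hbdd s
        obtain ⟨hl, -, -⟩ := S.lamstar_spec h h1 h2
        refine S.opt_of_maximizer hl (S.meas_FposX s) (S.int_FposX hl)
          (S.FposX_effort h (S.adm_of_not_bdd hbdd s)) ?_ hfmeas hfnn hfint hfeff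
        filter_upwards [ae_restrict_mem S.hX] with x hx
        exact S.FposX_maximizer hx hl
      · have hs0 : s = 0 := le_antisymm (not_lt.1 h) hs
        simp only [if_neg h]
        refine S.opt_zero hfmeas hfnn hfint (by rw [hfeff, hs0]) ?_
        exact Eventually.of_forall (fun x => le_rfl)
  case pos =>
    obtain ⟨A, hAmeas, hAsub, hApos⟩ := S.exists_dump
    set a := (volume A).toReal with ha
    -- the full family
    set Ffin : ℝ → (Fin n → ℝ) → ℝ :=
      fun s x => S.fmax x + (if x ∈ A then (s - S.Seff)/a else 0) with hFfin
    set F : ℝ → (Fin n → ℝ) → ℝ := fun s x =>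
      if 0 < s then
        (if s < S.Seff then (if x ∈ S.Nbad then 0 else S.FposX s x) else Ffin s x)
      else 0 with hF
    have hFfin_meas : ∀ s, Measurable (Ffin s) := by
      intro s
      exact S.meas_fmax.add (Measurable.ite (hAmeas) measurable_const measurable_const)
    have hFfin_nonneg : ∀ s, S.Seff ≤ s → ∀ x, 0 ≤ Ffin s x := by
      intro s hss x
      refine add_nonneg (S.fmax_nonneg x) ?_
      split_ifs with h
      · exact div_nonneg (by linarith) hApos.le
      · exact le_rfl
    have hFfin_ge_fmax : ∀ s, S.Seff ≤ s → ∀ x, S.fmax x ≤ Ffin s x := by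
      intro s hss x
      simp only [hFfin]
      have : (0:ℝ) ≤ (if x ∈ A then (s - S.Seff)/a else 0) := by
        split_ifs with h
        · exact div_nonneg (by linarith) hApos.le
        · exact le_rfl
      linarith
    have hFfin_int : ∀ s, IntegrableOn (Ffin s) S.X := by
      intro s
      refine Integrable.add (S.int_fmax hbdd).1 ?_
      have h1 : (fun x => if x ∈ A then (s - S.Seff)/a else 0) =
          A.indicator (fun _ => (s - S.Seff)/a) := by
        funext x
        simp [Set.indicator_apply]
      rw [h1]
      rw [integrable_indicator_iff hAmeas]
      refine integrableOn_const (ne_of_lt ?_)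
      have h2 : (volume.restrict S.X) A ≤ volume A := Measure.restrict_le_self A
      have h3 : volume A < ⊤ := by
        by_contra hc
        push_neg at hc
        have h4 : (volume A).toReal = 0 := by rw [top_le_iff.1 hc]; simp
        have hApos' : 0 < (volume A).toReal := hApos
        rw [h4] at hApos'
        norm_num at hApos'
      exact lt_of_le_of_lt h2 h3
    have hFfin_eff : ∀ s, S.Seff ≤ s → ∫ x in S.X, Ffin s x = s := by
      intro s hss
      simp only [hFfin]
      have h1 : (fun x => if x ∈ A then (s - S.Seff)/a else 0) =
          A.indicator (fun _ => (s - S.Seff)/a) := by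
        funext x
        simp [Set.indicator_apply]
      rw [integral_add (S.int_fmax hbdd).1 ?_]
      swap
      · have := hFfin_int s
        rw [hFfin] at this
        have h2 := this.sub (S.int_fmax hbdd).1
        refine h2.congr ?_
        filter_upwards with x
        simp
      rw [(S.int_fmax hbdd).2]
      have h3 : ∫ x in S.X, (if x ∈ A then (s - S.Seff)/a else 0) = (s - S.Seff) := by
        rw [h1, integral_indicator hAmeas, setIntegral_const]
        rw [measureReal_def, Measure.restrict_apply hAmeas, Set.inter_eq_self_of_subset_left hAsub,
          smul_eq_mul, ← ha]
        field_simp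
      rw [h3]
      ring
    -- basic facts
    have hlam : ∀ s, 0 < s → s < S.Seff → 0 < S.lamstar s := by
      intro s hs hsS
      obtain ⟨lam0, h1, h2⟩ := S.adm_of_lt_Seff hbdd hsS
      exact (S.lamstar_spec hs h1 h2).1
    have hG_nonneg : ∀ s x, 0 < s → s < S.Seff →
        0 ≤ (if x ∈ S.Nbad then 0 else S.FposX s x) := by
      intro s x hs hsS
      split_ifs with h
      · exact le_rfl
      · exact S.FposX_nonneg (hlam s hs hsS) x
    have hG_meas : ∀ s, Measurable (fun x => if x ∈ S.Nbad then 0 else S.FposX s x) :=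
      fun s => Measurable.ite S.meas_Nbad measurable_const (S.meas_FposX s)
    have hG_int : ∀ s, 0 < s → s < S.Seff →
        IntegrableOn (fun x => if x ∈ S.Nbad then 0 else S.FposX s x) S.X := by
      intro s hs hsS
      refine Integrable.mono' (S.int_Yb (hlam s hs hsS)) (hG_meas s).aestronglyMeasurable ?_
      filter_upwards [ae_restrict_mem S.hX] with x hx
      rw [Real.norm_eq_abs, abs_of_nonneg (hG_nonneg s x hs hsS)]
      split_ifs with h
      · exact S.Yb_nonneg (hlam s hs hsS) hx
      · exact (S.FposX_between hx (hlam s hs hsS)).2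
    have hG_eff : ∀ s, 0 < s → s < S.Seff →
        ∫ x in S.X, (if x ∈ S.Nbad then 0 else S.FposX s x) = s := by
      intro s hs hsS
      have h1 : ∫ x in S.X, (if x ∈ S.Nbad then 0 else S.FposX s x) =
          ∫ x in S.X, S.FposX s x := by
        refine integral_congr_ae ?_
        filter_upwards [S.Nbad_ae hbdd] with x hx
        rw [if_neg hx]
      rw [h1]
      exact S.FposX_effort hs (S.adm_of_lt_Seff hbdd hsS)
    have hFnonneg : ∀ s x, 0 ≤ F s x := by
      intro s x
      simp only [hF]
      split_ifs with h h2
      · exact le_rfl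
      · exact S.FposX_nonneg (hlam s h h2) x
      · exact hFfin_nonneg s (not_lt.1 h2) x
      · exact le_rfl
    refine ⟨F, ?_, ?_, ?_, ?_, ?_⟩
    · -- measurability
      intro s
      simp only [hF]
      by_cases h : 0 < s
      · simp only [if_pos h]
        by_cases h2 : s < S.Seff
        · simp only [if_pos h2]
          exact hG_meas s
        · simp only [if_neg h2]
          exact hFfin_meas s
      · simp only [if_neg h]
        exact measurable_const
    · exact fun s x => hFnonneg s x
    · -- monotonicity
      intro s s' x hs hss
      by_cases h : 0 < s
      swap
      · have hs0 : s = 0 := le_antisymm (not_lt.1 h) hs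
        have : F s x = 0 := by simp only [hF, if_neg h]
        rw [this]
        exact hFnonneg s' x
      have h' : 0 < s' := lt_of_lt_of_le h hss
      by_cases h2 : s < S.Seff
      · by_cases h2' : s' < S.Seff
        · simp only [hF, if_pos h, if_pos h', if_pos h2, if_pos h2']
          split_ifs with hnb
          · exact le_rfl
          · exact S.FposX_mono h hss (S.adm_of_lt_Seff hbdd h2') x
        · simp only [hF, if_pos h, if_pos h', if_pos h2, if_neg h2']
          split_ifs with hnb
          · exact hFfin_nonneg s' (not_lt.1 h2') x
          · by_cases hx : x ∈ S.X
            · calc S.FposX s x ≤ S.Yb (S.lamstar s) x :=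
                    (S.FposX_between hx (hlam s h h2)).2
                _ ≤ S.fmax x := S.fmax_ge_Yb (hlam s h h2) hx hnb
                _ ≤ Ffin s' x := hFfin_ge_fmax s' (not_lt.1 h2') x
            · have : S.FposX s x = 0 := by unfold FposX; rw [if_neg hx]
              rw [this]
              exact hFfin_nonneg s' (not_lt.1 h2') x
      · have h2' : ¬ s' < S.Seff := fun hc => h2 (lt_of_le_of_lt hss hc)
        simp only [hF, if_pos h, if_pos h', if_neg h2, if_neg h2']
        simp only [hFfin]
        have : (if x ∈ A then (s - S.Seff)/a else 0) ≤
            (if x ∈ A then (s' - S.Seff)/a else 0) := by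
          split_ifs with hxa
          · have h9 := mul_le_mul_of_nonneg_right
              (show s - S.Seff ≤ s' - S.Seff by linarith) (inv_nonneg.2 hApos.le)
            simpa [div_eq_mul_inv] using h9
          · exact le_rfl
        linarith
    · -- effort
      intro s hs
      by_cases h : 0 < s
      · by_cases h2 : s < S.Seff
        · simp only [hF, if_pos h, if_pos h2]
          exact hG_eff s h h2
        · simp only [hF, if_pos h, if_neg h2]
          exact hFfin_eff s (not_lt.1 h2)
      · simp only [hF, if_neg h]
        rw [integral_zero]
        linarith [not_lt.1 h]
    · -- optimality
      intro s hs f hfmeas hfnn hfint hfeff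
      by_cases h : 0 < s
      · by_cases h2 : s < S.Seff
        · simp only [hF, if_pos h, if_pos h2]
          refine S.opt_of_maximizer (hlam s h h2) (hG_meas s) (hG_int s h h2)
            (hG_eff s h h2) ?_ hfmeas hfnn hfint hfeff
          filter_upwards [ae_restrict_mem S.hX, S.Nbad_ae hbdd] with x hx hnb
          rw [if_neg hnb]
          exact S.FposX_maximizer hx (hlam s h h2)
        · simp only [hF, if_pos h, if_neg h2]
          have hSs : S.Seff ≤ s := not_lt.1 h2
          have hifm := S.int_val S.meas_fmax (Eventually.of_forall S.fmax_nonneg)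
          have hifs := S.int_val (hFfin_meas s)
            (Eventually.of_forall (hFfin_nonneg s hSs))
          have hstep1 : ∫ x in S.X, S.d x (f x) * S.π x ≤
              ∫ x in S.X, S.d x (S.fmax x) * S.π x := by
            refine integral_mono_ae (S.int_val hfmeas (Eventually.of_forall hfnn)) hifm ?_
            filter_upwards [ae_restrict_mem S.hX, S.Nbad_ae hbdd] with x hx hnb
            exact mul_le_mul_of_nonneg_right (S.fmax_dmax hx hnb (f x) (hfnn x))
              (S.π_nonneg x)
          have hstep2 : ∫ x in S.X, S.d x (S.fmax x) * S.π x ≤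
              ∫ x in S.X, S.d x (Ffin s x) * S.π x := by
            refine integral_mono_ae hifm hifs ?_
            filter_upwards [ae_restrict_mem S.hX] with x hx
            have h3 : S.d x (S.fmax x) ≤ S.d x (Ffin s x) :=
              (S.hnice x hx).mono (S.fmax_nonneg x)
                (le_trans (S.fmax_nonneg x) (hFfin_ge_fmax s hSs x))
                (hFfin_ge_fmax s hSs x)
            exact mul_le_mul_of_nonneg_right h3 (S.π_nonneg x)
          exact le_trans hstep1 hstep2
      · have hs0 : s = 0 := le_antisymm (not_lt.1 h) hs
        simp only [hF, if_neg h]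
        refine S.opt_zero hfmeas hfnn hfint (by rw [hfeff, hs0]) ?_
        exact Eventually.of_forall (fun x => le_rfl)

end Setting
end SearchPlan
open SearchPlan MeasureTheory Set Filter Topology

/-- Existence of a uniformly optimal search plan in the continuous case
(Theorem 1(ii) of the paper): if `X ⊆ ℝⁿ` is measurable, `π` a probability density supported
on `X`, `d` a jointly measurable detection function with `d x 0 = 0` and `d x ·` nondecreasing
and right-continuous, and `E` a cumulative effort function, then there is a search plan `φ*`
in `Φ(E)` maximizing the subjective detection probability at every time. -/
theorem uniformly_optimal_exists_continuous
    {n : ℕ} (X : Set (Fin n → ℝ)) (hX : MeasurableSet X)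
    (π : (Fin n → ℝ) → ℝ) (hπmeas : Measurable π)
    (hπpos : ∀ x ∈ X, 0 < π x) (hπzero : ∀ x ∉ X, π x = 0)
    (hπint : ∫ x, π x = 1)
    (d : (Fin n → ℝ) → ℝ → ℝ)
    (hdmeas : Measurable (Function.uncurry d))
    (hdrange : ∀ x ∈ X, ∀ y ∈ Set.Ici (0:ℝ), d x y ∈ Set.Icc (0:ℝ) 1)
    (hd0 : ∀ x ∈ X, d x 0 = 0)
    (hdmono : ∀ x ∈ X, MonotoneOn (d x) (Set.Ici 0))
    (hdrc : ∀ x ∈ X, ∀ y ∈ Set.Ici (0:ℝ), ContinuousWithinAt (d x) (Set.Ici y) y)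
    (E : ℝ → ℝ) (hE0 : ∀ t, 0 ≤ t → 0 ≤ E t)
    (hEmono : MonotoneOn E (Set.Ici 0))
    (hEpos : ∀ t, 0 < t → 0 < E t) :
    ∃ φstar : (Fin n → ℝ) → ℝ → ℝ,
      (∀ t, 0 ≤ t → Measurable fun x => φstar x t) ∧
      (∀ x t, 0 ≤ t → 0 ≤ φstar x t) ∧
      (∀ x, MonotoneOn (φstar x) (Set.Ici 0)) ∧
      (∀ t, 0 ≤ t → ∫ x in X, φstar x t = E t) ∧
      ∀ φ : (Fin n → ℝ) → ℝ → ℝ,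
        (∀ t, 0 ≤ t → Measurable fun x => φ x t) →
        (∀ x t, 0 ≤ t → 0 ≤ φ x t) →
        (∀ x, MonotoneOn (φ x) (Set.Ici 0)) →
        (∀ t, 0 ≤ t → ∫ x in X, φ x t = E t) →
        ∀ t, 0 ≤ t →
          ∫ x in X, d x (φ x t) * π x ≤ ∫ x in X, d x (φstar x t) * π x := by
  rcases Nat.eq_zero_or_pos n with hn0 | hn
  · -- the degenerate zero-dimensional case: the space is a single point
    subst hn0
    have hvol : (volume : Measure (Fin 0 → ℝ)) Set.univ = 1 := by
      rw [volume_pi, Measure.pi_univ]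
      simp
    set x0 : Fin 0 → ℝ := fun _ => 0 with hx0
    have hone : ∀ f : (Fin 0 → ℝ) → ℝ, ∫ x, f x = f x0 := by
      intro f
      rw [integral_unique, measureReal_def, hvol]
      simp only [ENNReal.toReal_one, one_smul]
      exact congrArg f (Subsingleton.elim _ _)
    have hπd : π x0 = 1 := (hone π).symm.trans hπint
    have hdef : x0 ∈ X := by
      by_contra hc
      rw [hπzero x0 hc] at hπd
      norm_num at hπd
    have hXuniv : X = Set.univ := by
      refine Set.eq_univ_iff_forall.2 (fun x => ?_)
      have hxeq : x = x0 := Subsingleton.elim _ _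
      rw [hxeq]
      exact hdef
    have hint_eval : ∀ f : (Fin 0 → ℝ) → ℝ, ∫ x in X, f x = f x0 := by
      intro f
      rw [hXuniv, Measure.restrict_univ]
      exact hone f
    refine ⟨fun _ t => if 0 ≤ t then E t else 0, ?_, ?_, ?_, ?_, ?_⟩
    · intro t ht
      exact measurable_const
    · intro x t ht
      simp only [if_pos ht]
      exact hE0 t ht
    · intro x t1 h1 t2 h2 h12
      have h1' : (0:ℝ) ≤ t1 := h1
      have h2' : (0:ℝ) ≤ t2 := h2
      simp only [if_pos h1', if_pos h2']
      exact hEmono h1 h2 h12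
    · intro t ht
      simp only [if_pos ht]
      exact hint_eval (fun _ => E t)
    · intro φ hφmeas hφnn hφmono hφeff t ht
      have h1 : φ x0 t = E t := by
        have := hφeff t ht
        rwa [hint_eval] at this
      simp only [if_pos ht]
      rw [hint_eval, hint_eval, h1]
  · -- the main case `n ≥ 1`
    set S : SearchPlan.Setting n :=
      { hn := hn, X := X, π := π, d := d, hX := hX, hπmeas := hπmeas,
        hdmeas := hdmeas,
        hnice := by
          intro x hx
          exact { mono := hdmono x hx,
                  rc := fun y hy => hdrc x hx y hy,
                  nonneg := fun y hy => (hdrange x hx y hy).1,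
                  le_one := fun y hy => (hdrange x hx y hy).2,
                  zero := hd0 x hx,
                  ppos := hπpos x hx },
        hπzero := hπzero, hπint := hπint } with hS
    obtain ⟨F, hFmeas, hFnn, hFmono, hFeff, hFopt⟩ := S.main
    refine ⟨fun x t => if 0 ≤ t then F (E t) x else 0, ?_, ?_, ?_, ?_, ?_⟩
    · intro t ht
      simp only [if_pos ht]
      exact hFmeas (E t)
    · intro x t ht
      simp only [if_pos ht]
      exact hFnn (E t) x
    · intro x t1 h1 t2 h2 h12
      have h1' : (0:ℝ) ≤ t1 := h1
      have h2' : (0:ℝ) ≤ t2 := h2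
      simp only [if_pos h1', if_pos h2']
      exact hFmono (E t1) (E t2) x (hE0 t1 h1) (hEmono h1 h2 h12)
    · intro t ht
      have h1 : ∫ x in X, (if 0 ≤ t then F (E t) x else 0) = ∫ x in X, F (E t) x := by
        refine setIntegral_congr_fun hX (fun x hx => ?_)
        rw [if_pos ht]
      rw [h1]
      exact hFeff (E t) (hE0 t ht)
    · intro φ hφmeas hφnn hφmono hφeff t ht
      set f : (Fin n → ℝ) → ℝ := fun x => φ x t with hf
      have hfm : Measurable f := hφmeas t ht
      have hfnn : ∀ x, 0 ≤ f x := fun x => hφnn x t ht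
      have hfe : ∫ x in X, f x = E t := hφeff t ht
      have hfint : IntegrableOn f X := by
        by_cases hE : E t = 0
        · -- dominate by the allocation at time `max t 1`
          have hg : IntegrableOn (fun x => φ x (max t 1)) X := by
            by_contra hni
            have h2 := hφeff (max t 1) (le_trans ht (le_max_left _ _))
            rw [integral_undef hni] at h2
            have h3 : (0:ℝ) < E (max t 1) :=
              hEpos _ (lt_of_lt_of_le one_pos (le_max_right _ _))
            rw [← h2] at h3
            norm_num at h3
          refine Integrable.mono' hg hfm.aestronglyMeasurable ?_
          refine Eventually.of_forall (fun x => ?_)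
          rw [Real.norm_eq_abs, abs_of_nonneg (hfnn x)]
          exact hφmono x ht (le_trans ht (le_max_left _ _)) (le_max_left _ _)
        · by_contra hni
          rw [integral_undef hni] at hfe
          exact hE hfe.symm
      have hkey := hFopt (E t) (hE0 t ht) f hfm hfnn hfint hfe
      have h2 : ∫ x in X, d x ((if 0 ≤ t then F (E t) x else 0)) * π x =
          ∫ x in X, d x (F (E t) x) * π x := by
        refine setIntegral_congr_fun hX (fun x hx => ?_)
        rw [if_pos ht]
      rw [h2]
      exact hkey
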